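/- arXiv:1508.05671 — 9 statements merged into one kernel-verified Lean document; each statement's English description precedes it below -/
import Mathlib

section
/- Let n ≥ 1, let A be a real n×n matrix with det A > 0, and let b ∈ ℝⁿ be such that the pair (A,b) is controllable, i.e. the n×n matrix with columns b, Ab, …, A^{n−1}b is invertible. Let λ₁,…,λₙ ∈ ℂ be the spectrum (with multiplicities) of some real n×n matrix R with det R > 0. Then there exists K ∈ ℝⁿ such that the matrix A·exp(bKᵀ) has the same characteristic polynomial as R (hence spectrum {λ₁,…,λₙ} with multiplicities), where exp is the matrix exponential and bKᵀ denotes the rank-one matrix with entries bᵢKⱼ. -/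
open Matrix Polynomial


theorem my_det_lem {n : ℕ} {F : Type*} [Field F] (P : Matrix (Fin n) (Fin n) F)
    (hP : IsUnit P.det) (u v : Fin n → F) :
    (P + vecMulVec u v).det = P.det + v ⬝ᵥ (P.adjugate *ᵥ u) := by
  have hd : P.det ≠ 0 := hP.ne_zero
  rw [vecMulVec_eq (Fin 1), Matrix.det_add_replicateCol_mul_replicateRow hP]
  simp [Matrix.det_fin_one, Matrix.mul_apply, dotProduct, Matrix.mulVec,
    Matrix.nonsing_inv_apply _ hP, Finset.mul_sum]
  rw [mul_add, mul_one, Finset.mul_sum]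
  congr 1
  rw [Finset.sum_comm]
  refine Finset.sum_congr rfl fun j _ => ?_
  rw [← mul_assoc, mul_inv_cancel₀ hd, one_mul, Finset.sum_mul]
  exact Finset.sum_congr rfl fun i _ => by ring

theorem my_det_lem_poly {n : ℕ} (P : Matrix (Fin n) (Fin n) (Polynomial ℝ)) (hP : P.det ≠ 0)
    (u v : Fin n → Polynomial ℝ) :
    (P + vecMulVec u v).det = P.det + v ⬝ᵥ (P.adjugate *ᵥ u) := by
  set f : Polynomial ℝ →+* RatFunc ℝ := (algebraMap (Polynomial ℝ) (RatFunc ℝ)) with hf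
  have hinj : Function.Injective f := IsFractionRing.injective (Polynomial ℝ) (RatFunc ℝ)
  apply hinj
  have hmapdp : ∀ (w z : Fin n → Polynomial ℝ), f (w ⬝ᵥ z) = (f ∘ w) ⬝ᵥ (f ∘ z) := by
    intro w z
    simp [dotProduct, map_sum]
  have hmv : ∀ (M : Matrix (Fin n) (Fin n) (Polynomial ℝ)) (w : Fin n → Polynomial ℝ),
      (f ∘ (M *ᵥ w)) = (f.mapMatrix M) *ᵥ (f ∘ w) := by
    intro M w
    funext i
    simp [Matrix.mulVec, dotProduct, map_sum]
  have hPu : IsUnit (f.mapMatrix P).det := by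
    rw [← RingHom.map_det]
    exact isUnit_iff_ne_zero.mpr (fun h => hP (hinj (by simpa using h)))
  rw [map_add, hmapdp, hmv, f.map_adjugate P, RingHom.map_det, RingHom.map_det]
  have : f.mapMatrix (P + vecMulVec u v) = f.mapMatrix P + vecMulVec (f ∘ u) (f ∘ v) := by
    ext i j
    simp [vecMulVec_apply]
  rw [this, my_det_lem _ hPu]

theorem my_charpoly_add {n : ℕ} (A : Matrix (Fin n) (Fin n) ℝ) (u v : Fin n → ℝ) :
    (A + vecMulVec u v).charpoly
      = A.charpoly - (fun i => C (v i)) ⬝ᵥ ((charmatrix A).adjugate *ᵥ (fun i => C (u i))) := by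
  have h1 : charmatrix (A + vecMulVec u v)
      = charmatrix A + vecMulVec (fun i => -C (u i)) (fun i => C (v i)) := by
    ext i j
    by_cases h : i = j <;>
      simp [h, charmatrix_apply, vecMulVec_apply, Matrix.add_apply] <;> ring
  have h2 : (charmatrix A).det ≠ 0 := by
    have := A.charpoly_monic
    rw [Matrix.charpoly] at this
    exact this.ne_zero
  rw [Matrix.charpoly, h1, my_det_lem_poly _ h2]
  rw [Matrix.charpoly]
  have : ((charmatrix A).adjugate *ᵥ fun i => -C (u i))
      = -((charmatrix A).adjugate *ᵥ fun i => C (u i)) := by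
    rw [← Matrix.mulVec_neg]
    rfl
  rw [this, dotProduct_neg, sub_eq_add_neg]

section Rec
variable {n : ℕ} (A : Matrix (Fin n) (Fin n) ℝ) (u : Fin n → ℝ)

noncomputable def qvec : Fin n → Polynomial ℝ :=
  (charmatrix A).adjugate *ᵥ (fun i => C (u i))

noncomputable def wvec (k : ℕ) : Fin n → ℝ := fun i => (qvec A u i).coeff k

theorem key_identity :
    charmatrix A *ᵥ (qvec A u) = fun i => A.charpoly * C (u i) := by
  rw [qvec, Matrix.mulVec_mulVec, Matrix.mul_adjugate]
  funext i
  simp [Matrix.smul_mulVec, Matrix.charpoly]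

theorem wvec_rec (k : ℕ) :
    wvec A u k = A *ᵥ (wvec A u (k+1)) + (A.charpoly.coeff (k+1)) • u := by
  funext i
  have h := congrFun (key_identity A u) i
  have h2 := congrArg (fun p => Polynomial.coeff p (k+1)) h
  simp only [Matrix.mulVec, dotProduct, charmatrix_apply] at h2
  simp only [sub_mul, Finset.sum_sub_distrib, diagonal_apply] at h2
  rw [Polynomial.coeff_sub, Polynomial.finset_sum_coeff, Polynomial.finset_sum_coeff] at h2
  simp only [ite_mul, zero_mul, Polynomial.coeff_C_mul, Polynomial.coeff_mul_C,
    apply_ite (fun p : Polynomial ℝ => p.coeff (k+1)), Polynomial.coeff_zero,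
    Finset.sum_ite_eq, Finset.mem_univ, if_true] at h2
  rw [Polynomial.coeff_X_mul] at h2
  simp only [wvec, Pi.add_apply, Matrix.mulVec, dotProduct, Pi.smul_apply, smul_eq_mul]
  linarith [h2]


theorem wvec_eventually_zero : ∃ D : ℕ, ∀ k ≥ D, wvec A u k = 0 := by
  refine ⟨(Finset.univ.sup fun i => (qvec A u i).natDegree) + 1, fun k hk => ?_⟩
  funext i
  apply Polynomial.coeff_eq_zero_of_natDegree_lt
  have : (qvec A u i).natDegree ≤ Finset.univ.sup fun i => (qvec A u i).natDegree :=
    Finset.le_sup (f := fun i => (qvec A u i).natDegree) (Finset.mem_univ i)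
  omega

theorem charpoly_coeff_zero_of_gt (hn : 0 < n) {k : ℕ} (hk : n < k) : A.charpoly.coeff k = 0 := by
  apply Polynomial.coeff_eq_zero_of_natDegree_lt
  rw [Matrix.charpoly_natDegree_eq_dim]
  simpa using hk

theorem wvec_zero_of_ge (hn : 0 < n) (k : ℕ) (hk : n ≤ k) : wvec A u k = 0 := by
  obtain ⟨D, hD⟩ := wvec_eventually_zero A u
  have key : ∀ j k, n ≤ k → wvec A u k = (A ^ j) *ᵥ wvec A u (k + j) := by
    intro j
    induction j with
    | zero => intro k _; simp
    | succ j ih =>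
      intro k hk
      rw [wvec_rec A u k, charpoly_coeff_zero_of_gt A hn (by omega), zero_smul, add_zero,
        ih (k+1) (by omega)]
      rw [Matrix.mulVec_mulVec, ← pow_succ']
      ring_nf
  rw [key D k hk, hD (k + D) (by omega)]
  simp

theorem wvec_formula (hn : 0 < n) : ∀ j, j < n →
    wvec A u (n - 1 - j) = (A ^ j) *ᵥ u
      + ∑ i ∈ Finset.range j, (A.charpoly.coeff (n - j + i)) • ((A ^ i) *ᵥ u) := by
  intro j
  induction j with
  | zero =>
    intro _
    have h := wvec_rec A u (n - 1)
    have hn1 : n - 1 + 1 = n := by omega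
    rw [hn1] at h
    have hcn : A.charpoly.coeff n = 1 := by
      have := A.charpoly_monic
      have hd : A.charpoly.natDegree = n := by
        rw [Matrix.charpoly_natDegree_eq_dim]; simp
      have h2 := this.coeff_natDegree
      rw [hd] at h2
      exact h2
    rw [wvec_zero_of_ge A u hn n le_rfl, hcn] at h
    simpa using h
  | succ j ih =>
    intro hj
    have hj' : j < n := by omega
    have harith : n - 1 - (j+1) + 1 = n - 1 - j := by omega
    have h := wvec_rec A u (n - 1 - (j+1))
    rw [harith, ih hj'] at h
    rw [h]
    rw [Matrix.mulVec_add, Matrix.mulVec_mulVec, ← pow_succ']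
    rw [Finset.sum_range_succ']
    have e0 : n - (j+1) + 0 = n - 1 - (j+1) + 1 := by omega
    have e1 : ∀ i, i < j → n - (j+1) + (i+1) = n - j + i := by omega
    have hsum : A *ᵥ (∑ i ∈ Finset.range j, A.charpoly.coeff (n - j + i) • ((A ^ i) *ᵥ u))
        = ∑ i ∈ Finset.range j, A.charpoly.coeff (n - j + i) • (A *ᵥ ((A ^ i) *ᵥ u)) := by
      simp only [← Matrix.mulVecLin_apply]
      rw [map_sum]
      simp only [_root_.map_smul]
    rw [hsum]
    simp only [Matrix.mulVec_smul, Matrix.mulVec_mulVec, ← pow_succ']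
    rw [e0]
    have : ∑ i ∈ Finset.range j, A.charpoly.coeff (n - (j+1) + (i+1)) • ((A ^ (i+1)) *ᵥ u)
        = ∑ i ∈ Finset.range j, A.charpoly.coeff (n - j + i) • ((A ^ (i+1)) *ᵥ u) := by
      refine Finset.sum_congr rfl fun i hi => ?_
      rw [e1 i (Finset.mem_range.mp hi)]
    rw [this]
    simp only [pow_zero, Matrix.one_mulVec]
    rw [harith]
    abel

end Rec

section Solve
variable {n : ℕ} (A : Matrix (Fin n) (Fin n) ℝ) (b : Fin n → ℝ)

theorem exists_gain (hn : 0 < n) (hA : IsUnit A.det)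
    (hctrb : IsUnit (Matrix.of fun (i j : Fin n) => ((A ^ (j : ℕ)) *ᵥ b) i).det)
    (d : Fin n → ℝ) :
    ∃ M : Fin n → ℝ, ∀ k : Fin n,
      (∑ i, M i * wvec A (A *ᵥ b) (k : ℕ) i) = d k := by
  set u : Fin n → ℝ := A *ᵥ b with hu
  set Vmat : Matrix (Fin n) (Fin n) ℝ := Matrix.of fun i j => ((A ^ (j : ℕ)) *ᵥ u) i with hV
  set Umat : Matrix (Fin n) (Fin n) ℝ := Matrix.of fun i j =>
    if (i : ℕ) = (j : ℕ) then 1 else if (i : ℕ) < (j : ℕ) then A.charpoly.coeff (n - j + i) else 0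
    with hU
  set Wrev : Matrix (Fin n) (Fin n) ℝ := Matrix.of fun i j => wvec A u (n - 1 - (j : ℕ)) i with hW
  -- Wrev = Vmat * Umat
  have hWVU : Wrev = Vmat * Umat := by
    ext i j
    rw [hW, Matrix.of_apply, wvec_formula A u hn (j : ℕ) j.isLt, Matrix.mul_apply]
    have hsplit : ∀ j' : Fin n, Vmat i j' * Umat j' j =
        (if (j' : ℕ) = (j : ℕ) then ((A ^ (j : ℕ)) *ᵥ u) i else 0)
        + (if (j' : ℕ) < (j : ℕ) then A.charpoly.coeff (n - j + j') * ((A ^ (j' : ℕ)) *ᵥ u) i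
           else 0) := by
      intro j'
      rw [hV, hU, Matrix.of_apply, Matrix.of_apply]
      rcases lt_trichotomy (j' : ℕ) (j : ℕ) with h | h | h
      · simp [h, Nat.ne_of_lt h, mul_comm]
      · have hx : j' = j := Fin.ext h
        subst hx
        simp
      · simp [Nat.ne_of_gt h, not_lt.mpr (le_of_lt h), h]
    rw [Finset.sum_congr rfl fun j' _ => hsplit j', Finset.sum_add_distrib]
    simp only [Pi.add_apply, Finset.sum_apply, Pi.smul_apply, smul_eq_mul]
    congr 1
    · have : ∀ x : Fin n, ((x : ℕ) = (j : ℕ)) = (x = j) := fun x => by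
        simp [Fin.ext_iff]
      simp only [this]
      rw [Finset.sum_ite_eq' Finset.univ j (fun _ => ((A ^ (j : ℕ)) *ᵥ u) i)]
      simp
    · have hj := j.isLt
      rw [Fin.sum_univ_eq_sum_range
        (fun m => if m < (j : ℕ) then A.charpoly.coeff (n - j + m) * ((A ^ m) *ᵥ u) i else 0)]
      rw [← Finset.sum_filter]
      have hfil : (Finset.range n).filter (fun m => m < (j : ℕ)) = Finset.range (j : ℕ) := by
        ext m
        simp only [Finset.mem_filter, Finset.mem_range]
        omega
      rw [hfil]
  -- invertibility
  have hdetU : Umat.det = 1 := by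
    have htri : Umat.BlockTriangular id := by
      intro i j hij
      simp only [hU, Matrix.of_apply]
      have h1 : ¬ ((i : ℕ) = (j : ℕ)) := by
        simp only [id] at hij
        omega
      have h2 : ¬ ((i : ℕ) < (j : ℕ)) := by
        simp only [id] at hij
        omega
      simp [h1, h2]
    rw [Matrix.det_of_upperTriangular htri]
    have : ∀ i : Fin n, Umat i i = 1 := fun i => by simp [hU]
    simp [this]
  have hdetV : IsUnit Vmat.det := by
    have : Vmat = A * (Matrix.of fun (i j : Fin n) => ((A ^ (j : ℕ)) *ᵥ b) i) := by
      ext i j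
      rw [hV, Matrix.of_apply, Matrix.mul_apply]
      have : (A ^ (j : ℕ)) *ᵥ u = A *ᵥ ((A ^ (j : ℕ)) *ᵥ b) := by
        rw [hu, Matrix.mulVec_mulVec, Matrix.mulVec_mulVec, ← pow_succ, ← pow_succ']
      rw [this]
      simp [Matrix.mulVec, dotProduct]
    rw [this, Matrix.det_mul]
    exact hA.mul hctrb
  have hdetW : IsUnit Wrev.det := by
    rw [hWVU, Matrix.det_mul, hdetU, mul_one]
    exact hdetV
  have hdetWT : IsUnit Wrev.transpose.det := by
    rwa [Matrix.det_transpose]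
  -- solve the linear system
  set M : Fin n → ℝ := (Wrev.transpose)⁻¹ *ᵥ (fun j => d (Fin.rev j)) with hM
  refine ⟨M, fun k => ?_⟩
  have hsol : Wrev.transpose *ᵥ M = fun j => d (Fin.rev j) := by
    rw [hM, Matrix.mulVec_mulVec, Matrix.mul_nonsing_inv _ hdetWT, Matrix.one_mulVec]
  have hk := congrFun hsol (Fin.rev k)
  simp only [Matrix.mulVec, dotProduct, Matrix.transpose_apply, Fin.rev_rev] at hk
  rw [← hk]
  refine Finset.sum_congr rfl fun i _ => ?_
  rw [hW, Matrix.of_apply]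
  have : n - 1 - ((Fin.rev k) : ℕ) = (k : ℕ) := by
    have := k.isLt
    simp [Fin.rev]
    omega
  rw [this, mul_comm]

end Solve

theorem pole_placement {n : ℕ} (hn : 0 < n) (A : Matrix (Fin n) (Fin n) ℝ)
    (hA : IsUnit A.det) (b : Fin n → ℝ)
    (hctrb : IsUnit (Matrix.of fun (i j : Fin n) => ((A ^ (j : ℕ)) *ᵥ b) i).det)
    (p : Polynomial ℝ) (hp : p.Monic) (hdeg : p.natDegree = n) :
    ∃ M : Fin n → ℝ, (A + vecMulVec (A *ᵥ b) M).charpoly = p := by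
  set u : Fin n → ℝ := A *ᵥ b with hu
  obtain ⟨M, hM⟩ := exists_gain A b hn hA hctrb (fun k => (A.charpoly - p).coeff (k : ℕ))
  refine ⟨M, ?_⟩
  rw [my_charpoly_add]
  have hQ : (fun i => C (M i)) ⬝ᵥ ((charmatrix A).adjugate *ᵥ (fun i => C (u i)))
      = A.charpoly - p := by
    have hcoeff : ∀ m : ℕ,
        ((fun i => C (M i)) ⬝ᵥ ((charmatrix A).adjugate *ᵥ (fun i => C (u i)))).coeff m
        = ∑ i, M i * wvec A u m i := by
      intro m
      simp only [dotProduct, Polynomial.finset_sum_coeff, Polynomial.coeff_C_mul, wvec, qvec]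
    apply Polynomial.ext
    intro m
    rw [hcoeff]
    have hAdeg : A.charpoly.natDegree = n := by
      rw [Matrix.charpoly_natDegree_eq_dim]; simp
    by_cases hm : m < n
    · exact hM ⟨m, hm⟩
    · push_neg at hm
      have hz : ∀ i, wvec A u m i = 0 := fun i =>
        congrFun (wvec_zero_of_ge A u hn m hm) i
      simp only [hz, mul_zero, Finset.sum_const_zero]
      rw [Polynomial.coeff_sub]
      rcases eq_or_lt_of_le hm with h | h
      · subst h
        have h1 : A.charpoly.coeff n = 1 := by
          have h0 := A.charpoly_monic.coeff_natDegree
          rwa [hAdeg] at h0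
        have h2 : p.coeff n = 1 := by
          have h0 := hp.coeff_natDegree
          rwa [hdeg] at h0
        rw [h1, h2, sub_self]
      · rw [Polynomial.coeff_eq_zero_of_natDegree_lt (by omega),
          Polynomial.coeff_eq_zero_of_natDegree_lt (by omega), sub_self]
  rw [hQ]
  ring

noncomputable def Sfun (c : ℝ) : ℝ := ∑' k : ℕ, c ^ k / ((k + 1).factorial : ℝ)

theorem Sfun_summable (c : ℝ) : Summable (fun k : ℕ => c ^ k / ((k + 1).factorial : ℝ)) := by
  apply Summable.of_norm
  apply Summable.of_nonneg_of_le (fun k => norm_nonneg _)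
    (fun k => ?_) (Real.summable_pow_div_factorial |c|)
  rw [Real.norm_eq_abs, abs_div, abs_pow]
  rw [Nat.abs_cast]
  apply div_le_div_of_nonneg_left (pow_nonneg (abs_nonneg _) _)
    (by positivity) ?_
  exact_mod_cast Nat.factorial_le (by omega)

theorem Sfun_zero : Sfun 0 = 1 := by
  rw [Sfun, tsum_eq_single 0]
  · norm_num
  · intro k hk
    rw [zero_pow hk, zero_div]

theorem mul_Sfun (c : ℝ) : c * Sfun c = Real.exp c - 1 := by
  rw [Sfun, ← tsum_mul_left]
  have h1 : Real.exp c = ∑' k : ℕ, c ^ k / (k.factorial : ℝ) := by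
    rw [Real.exp_eq_exp_ℝ, NormedSpace.exp_eq_tsum_div]
  have h2 : Summable (fun k : ℕ => c ^ k / (k.factorial : ℝ)) :=
    Real.summable_pow_div_factorial c
  rw [h1, h2.tsum_eq_zero_add]
  simp only [pow_zero, Nat.factorial_zero, Nat.cast_one, div_one]
  rw [add_sub_cancel_left]
  congr 1
  funext k
  rw [pow_succ]
  have : ((k + 1).factorial : ℝ) ≠ 0 := by positivity
  field_simp

theorem vecMulVec_mul_vecMulVec {n : ℕ} (b K : Fin n → ℝ) :
    vecMulVec b K * vecMulVec b K = (K ⬝ᵥ b) • vecMulVec b K := by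
  ext i j
  simp only [Matrix.mul_apply, vecMulVec_apply, Matrix.smul_apply, smul_eq_mul, dotProduct]
  rw [Finset.sum_mul]
  exact Finset.sum_congr rfl fun x _ => by ring

theorem vecMulVec_pow {n : ℕ} (b K : Fin n → ℝ) (k : ℕ) :
    vecMulVec b K ^ (k + 1) = ((K ⬝ᵥ b) ^ k) • vecMulVec b K := by
  induction k with
  | zero => simp
  | succ k ih =>
    rw [pow_succ, ih, Matrix.smul_mul, vecMulVec_mul_vecMulVec, smul_smul, pow_succ]

theorem exp_vecMulVec {n : ℕ} (b K : Fin n → ℝ) :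
    NormedSpace.exp (vecMulVec b K) = 1 + Sfun (K ⬝ᵥ b) • vecMulVec b K := by
  letI : SeminormedRing (Matrix (Fin n) (Fin n) ℝ) := Matrix.linftyOpSemiNormedRing
  letI : NormedRing (Matrix (Fin n) (Fin n) ℝ) := Matrix.linftyOpNormedRing
  letI : NormedAlgebra ℝ (Matrix (Fin n) (Fin n) ℝ) := Matrix.linftyOpNormedAlgebra
  rw [NormedSpace.exp_eq_tsum ℝ]
  show (∑' k : ℕ, ((k.factorial : ℝ))⁻¹ • vecMulVec b K ^ k) = _
  have hsummable : Summable fun k : ℕ => ((k.factorial : ℝ)⁻¹) • vecMulVec b K ^ k :=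
    NormedSpace.expSeries_summable' (𝕂 := ℝ) (vecMulVec b K)
  rw [hsummable.tsum_eq_zero_add]
  simp only [pow_zero, Nat.factorial_zero, Nat.cast_one, inv_one, one_smul]
  congr 1
  have heq : ∀ k : ℕ, (((k+1).factorial : ℝ)⁻¹) • vecMulVec b K ^ (k + 1)
      = ((K ⬝ᵥ b) ^ k / ((k+1).factorial : ℝ)) • vecMulVec b K := by
    intro k
    rw [vecMulVec_pow, smul_smul, div_eq_inv_mul]
  simp only [heq]
  rw [(Sfun_summable (K ⬝ᵥ b)).tsum_smul_const]
  rw [Sfun]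

theorem vecMulVec_smul_right {n : ℕ} (b M : Fin n → ℝ) (t : ℝ) :
    vecMulVec b (t • M) = t • vecMulVec b M := by
  ext i j
  simp [vecMulVec_apply]
  ring

theorem exists_exp_eq {n : ℕ} (b M : Fin n → ℝ) (h : 0 < 1 + M ⬝ᵥ b) :
    ∃ K : Fin n → ℝ, NormedSpace.exp (vecMulVec b K) = 1 + vecMulVec b M := by
  by_cases hs : M ⬝ᵥ b = 0
  · exact ⟨M, by rw [exp_vecMulVec, hs, Sfun_zero, one_smul]⟩
  · set s := M ⬝ᵥ b with hsdef
    set t := Real.log (1 + s) / s with htdef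
    refine ⟨t • M, ?_⟩
    rw [exp_vecMulVec, vecMulVec_smul_right]
    have hKb : (t • M) ⬝ᵥ b = t * s := by
      rw [smul_dotProduct, ← hsdef, smul_eq_mul]
    have hts : t * s = Real.log (1 + s) := by
      rw [htdef, div_mul_cancel₀ _ hs]
    have hexp : Real.exp (t * s) = 1 + s := by
      rw [hts, Real.exp_log h]
    have hS := mul_Sfun (t * s)
    rw [hexp, add_sub_cancel_left] at hS
    have hSt : Sfun (t * s) * t = 1 := by
      have h2 : (Sfun (t * s) * t) * s = t * s * Sfun (t * s) := by ring
      rw [hS] at h2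
      exact mul_right_cancel₀ hs (h2.trans (one_mul s).symm)
    rw [hKb, smul_smul, hSt, one_smul]

theorem mul_vecMulVec {n : ℕ} (A : Matrix (Fin n) (Fin n) ℝ) (b M : Fin n → ℝ) :
    A * vecMulVec b M = vecMulVec (A *ᵥ b) M := by
  ext i j
  simp only [Matrix.mul_apply, vecMulVec_apply, Matrix.mulVec, dotProduct, Finset.sum_mul]
  exact Finset.sum_congr rfl fun k _ => by ring

/-- **Brunovsky spectrum assignment (Lemma A.1).**
If `(A, b)` is controllable (the controllability matrix `[b, Ab, …, A^{n-1}b]` is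
invertible), `det A > 0`, and `R` is a real matrix with `det R > 0`, then there is a
gain vector `K` such that `A · exp(b Kᵀ)` has the same characteristic polynomial as `R`
(hence the same spectrum with multiplicities). -/
theorem stmt_0 (n : ℕ) (hn : 1 ≤ n)
    (A : Matrix (Fin n) (Fin n) ℝ) (hA : 0 < A.det)
    (b : Fin n → ℝ)
    (hctrb : IsUnit (Matrix.of fun (i j : Fin n) => ((A ^ (j : ℕ)) *ᵥ b) i).det)
    (R : Matrix (Fin n) (Fin n) ℝ) (hR : 0 < R.det) :
    ∃ K : Fin n → ℝ,
      (A * NormedSpace.exp (Matrix.vecMulVec b K)).charpoly = R.charpoly := by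
  have hn0 : 0 < n := hn
  have hAu : IsUnit A.det := isUnit_iff_ne_zero.mpr (ne_of_gt hA)
  have hpdeg : R.charpoly.natDegree = n := by
    rw [Matrix.charpoly_natDegree_eq_dim]; simp
  obtain ⟨M, hM⟩ := pole_placement hn0 A hAu b hctrb R.charpoly R.charpoly_monic hpdeg
  -- A + vecMulVec (A *ᵥ b) M = A * (1 + vecMulVec b M)
  have hfact : A + vecMulVec (A *ᵥ b) M = A * (1 + vecMulVec b M) := by
    rw [Matrix.mul_add, Matrix.mul_one, _root_.mul_vecMulVec]
  -- determinant computation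
  have hdet1 : (1 + vecMulVec b M).det = 1 + M ⬝ᵥ b := by
    have h1 : IsUnit (1 : Matrix (Fin n) (Fin n) ℝ).det := by simp
    have := my_det_lem (1 : Matrix (Fin n) (Fin n) ℝ) h1 b M
    simpa using this
  have hdets : (A + vecMulVec (A *ᵥ b) M).det = R.det := by
    have h1 := congrArg (fun p : Polynomial ℝ => p.coeff 0) hM
    rw [Matrix.det_eq_sign_charpoly_coeff, Matrix.det_eq_sign_charpoly_coeff, h1]
  have hpos : 0 < 1 + M ⬝ᵥ b := by
    have h2 : A.det * (1 + M ⬝ᵥ b) = R.det := by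
      rw [← hdets, hfact, Matrix.det_mul, hdet1]
    nlinarith
  obtain ⟨K, hK⟩ := exists_exp_eq b M hpos
  refine ⟨K, ?_⟩
  rw [hK, ← hfact, hM]
end

section
/- Let T > 0, ε > 0, n ≥ 1, and let A : ℝ → ℂ^{n×n} and b, K : ℝ → ℂⁿ be continuous and T-periodic. Let λ ∈ ℂ with λ ≠ 1−ε and set μ = 1 − ε/(λ−(1−ε)). Suppose x, x̃ : ℝ → ℂⁿ satisfy for all t ∈ [−T,0]: (i) λ·x̃(t) = (1−ε)·x̃(t) + ε·x(t); (ii) x′(t) = A(t)x(t) + (K(t)·(x̃(t)−x(t)))·b(t), where · in the scalar factor is the dot product; (iii) x(0) = λ·x(−T); and (iv) x(−T) ≠ 0. Let Y : ℝ → ℂ^{n×n} satisfy Y(0) = I and Y′(t) = (A(t) − μ·b(t)K(t)ᵀ)·Y(t) for all t ∈ [0,T]. Then det(λ·I − Y(T)) = 0. -/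
open Matrix Set

private lemma vecMulVec_mulVec' {n : ℕ} (b K v : Fin n → ℂ) :
    Matrix.vecMulVec b K *ᵥ v = (K ⬝ᵥ v) • b := by
  funext i
  simp only [Matrix.mulVec, dotProduct, Matrix.vecMulVec_apply, Pi.smul_apply,
    smul_eq_mul, mul_assoc, ← Finset.mul_sum]
  ring

/-- **Characteristic equation for Floquet multipliers (Lemma A.2).**
If `(x, x̃)` is an eigenfunction with eigenvalue `λ ≠ 1 - ε` of the time-`T` map of the
linearised extended time-delayed feedback system, then `λ` is a root of
`det(λ I − Y(T))`, where `Y` is the fundamental solution of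
`Y' = (A(t) − μ b(t) K(t)ᵀ) Y` with `μ = 1 − ε/(λ − (1 − ε))`. -/
theorem stmt_1 (n : ℕ) (hn : 1 ≤ n) (T ε : ℝ) (hT : 0 < T) (hε : 0 < ε)
    (A : ℝ → Matrix (Fin n) (Fin n) ℂ) (b K : ℝ → Fin n → ℂ)
    (hAc : Continuous A) (hbc : Continuous b) (hKc : Continuous K)
    (hAp : Function.Periodic A T) (hbp : Function.Periodic b T)
    (hKp : Function.Periodic K T)
    (lam : ℂ) (hlam : lam ≠ 1 - (ε : ℂ))
    (μ : ℂ) (hμ : μ = 1 - (ε : ℂ) / (lam - (1 - (ε : ℂ))))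
    (x xt : ℝ → Fin n → ℂ)
    (hrec : ∀ t ∈ Icc (-T) (0 : ℝ), lam • xt t = (1 - (ε : ℂ)) • xt t + (ε : ℂ) • x t)
    (hode : ∀ t ∈ Icc (-T) (0 : ℝ),
      HasDerivAt x ((A t) *ᵥ (x t) + ((K t) ⬝ᵥ (xt t - x t)) • b t) t)
    (hbc0 : x 0 = lam • x (-T))
    (hx0 : x (-T) ≠ 0)
    (Y : ℝ → Matrix (Fin n) (Fin n) ℂ)
    (hY0 : Y 0 = 1)
    (hYode : ∀ t ∈ Icc (0 : ℝ) T, ∀ i j,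
      HasDerivAt (fun s => Y s i j) (((A t - μ • Matrix.vecMulVec (b t) (K t)) * Y t) i j) t) :
    Matrix.det (lam • (1 : Matrix (Fin n) (Fin n) ℂ) - Y T) = 0 := by
  set d : ℂ := lam - (1 - (ε : ℂ)) with hd
  have hd0 : d ≠ 0 := sub_ne_zero.mpr hlam
  set M : ℝ → Matrix (Fin n) (Fin n) ℂ :=
    fun t => A t - μ • Matrix.vecMulVec (b t) (K t) with hM
  set c : Fin n → ℂ := x (-T) with hc
  -- Step 1: xt u - x u = -μ • x u on [-T, 0]
  have hxt : ∀ u ∈ Icc (-T) (0 : ℝ), xt u - x u = (-μ) • x u := by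
    intro u hu
    have h2 : d • xt u = (ε : ℂ) • x u := by
      rw [hd, sub_smul, hrec u hu]
      abel
    have h3 : xt u = ((ε : ℂ) / d) • x u := by
      have h4 := congrArg (fun v => d⁻¹ • v) h2
      simp only [smul_smul, inv_mul_cancel₀ hd0, one_smul] at h4
      rw [div_eq_inv_mul]
      exact h4
    have hm : (-μ) = (ε : ℂ) / d - 1 := by rw [hμ]; ring
    rw [h3, hm, sub_smul, one_smul]
  -- Step 2: x solves the linear ODE x' = M t x on [-T, 0]
  have hode' : ∀ u ∈ Icc (-T) (0 : ℝ), HasDerivAt x (M u *ᵥ x u) u := by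
    intro u hu
    have h := hode u hu
    have heq : A u *ᵥ x u + (K u ⬝ᵥ (xt u - x u)) • b u = M u *ᵥ x u := by
      rw [hxt u hu, dotProduct_smul, hM]
      rw [Matrix.sub_mulVec, Matrix.smul_mulVec, vecMulVec_mulVec']
      simp only [smul_eq_mul, smul_smul, neg_mul, neg_smul, sub_eq_add_neg]
    rwa [heq] at h
  -- Step 3: entrywise continuity of M and a Lipschitz bound
  have hMc : ∀ i j, Continuous fun t => M t i j := by
    intro i j
    have hA : Continuous fun t => A t i j :=
      (continuous_apply j).comp ((continuous_apply i).comp hAc)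
    have hb : Continuous fun t => b t i := (continuous_apply i).comp hbc
    have hK : Continuous fun t => K t j := (continuous_apply j).comp hKc
    simp only [hM, Matrix.sub_apply, Matrix.smul_apply, Matrix.vecMulVec_apply, smul_eq_mul]
    exact hA.sub (continuous_const.mul (hb.mul hK))
  set gB : ℝ → ℝ := fun t => ∑ i, ∑ j, ‖M t i j‖ with hgB
  have hgBc : Continuous gB := by
    apply continuous_finset_sum; intro i _
    exact continuous_finset_sum _ fun j _ => (hMc i j).norm
  obtain ⟨t0, ht0, hmax⟩ :=
    isCompact_Icc.exists_isMaxOn (nonempty_Icc.mpr hT.le) hgBc.continuousOn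
  set C : ℝ := gB t0 with hCdef
  have hC0 : 0 ≤ C :=
    Finset.sum_nonneg fun i _ => Finset.sum_nonneg fun j _ => norm_nonneg _
  have hCb : ∀ t ∈ Icc (0 : ℝ) T, gB t ≤ C := fun t ht => hmax ht
  have key : ∀ t ∈ Icc (0 : ℝ) T, ∀ y : Fin n → ℂ, ‖M t *ᵥ y‖ ≤ C * ‖y‖ := by
    intro t ht y
    rw [pi_norm_le_iff_of_nonneg (by positivity)]
    intro i
    calc ‖(M t *ᵥ y) i‖ = ‖∑ j, M t i j * y j‖ := by
          simp [Matrix.mulVec, dotProduct]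
      _ ≤ ∑ j, ‖M t i j * y j‖ := norm_sum_le _ _
      _ ≤ ∑ j, ‖M t i j‖ * ‖y‖ := by
          apply Finset.sum_le_sum; intro j _
          rw [norm_mul]
          exact mul_le_mul_of_nonneg_left (norm_le_pi_norm y j) (norm_nonneg _)
      _ = (∑ j, ‖M t i j‖) * ‖y‖ := by rw [← Finset.sum_mul]
      _ ≤ gB t * ‖y‖ := by
          apply mul_le_mul_of_nonneg_right _ (norm_nonneg _)
          exact Finset.single_le_sum (f := fun i => ∑ j, ‖M t i j‖)
            (fun i _ => Finset.sum_nonneg fun j _ => norm_nonneg _) (Finset.mem_univ i)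
      _ ≤ C * ‖y‖ := mul_le_mul_of_nonneg_right (hCb t ht) (norm_nonneg _)
  -- Step 4: the vector field and the Lipschitz hypothesis
  set sset : ℝ → Set (Fin n → ℂ) :=
    fun t => if t ∈ Icc (0 : ℝ) T then (univ : Set (Fin n → ℂ)) else ∅ with hsset
  set v : ℝ → (Fin n → ℂ) → (Fin n → ℂ) := fun t y => M t *ᵥ y with hvdef
  have hlip : ∀ t, LipschitzOnWith C.toNNReal (v t) (sset t) := by
    intro t
    by_cases ht : t ∈ Icc (0 : ℝ) T
    · rw [hsset]
      simp only [if_pos ht]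
      rw [lipschitzOnWith_univ]
      apply LipschitzWith.of_dist_le_mul
      intro y z
      rw [dist_eq_norm, dist_eq_norm, hvdef]
      simp only
      rw [← Matrix.mulVec_sub, Real.coe_toNNReal C hC0]
      exact key t ht _
    · rw [hsset]
      simp only [if_neg ht]
      exact lipschitzOnWith_empty _ _
  -- Step 5: the two solutions on [0, T]
  set f : ℝ → Fin n → ℂ := fun t => x (t - T) with hfdef
  set w : ℝ → Fin n → ℂ := fun t => Y t *ᵥ c with hwdef
  have hfc : ContinuousOn f (Icc 0 T) := by
    intro t ht
    have hmem : t - T ∈ Icc (-T) (0 : ℝ) := ⟨by linarith [ht.1], by linarith [ht.2]⟩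
    apply ContinuousAt.continuousWithinAt
    have h1 : ContinuousAt (fun s : ℝ => s - T) t :=
      (continuous_id.sub continuous_const).continuousAt
    exact ContinuousAt.comp (f := fun s : ℝ => s - T) (x := t)
      (hode' _ hmem).continuousAt h1
  have hfd : ∀ t ∈ Ico (0 : ℝ) T, HasDerivWithinAt f (v t (f t)) (Ici t) t := by
    intro t ht
    have hmem : t - T ∈ Icc (-T) (0 : ℝ) := ⟨by linarith [ht.1], by linarith [ht.2.le]⟩
    have h2 : HasDerivAt f (M (t - T) *ᵥ x (t - T)) t := by
      have := (hode' (t - T) hmem).scomp t ((hasDerivAt_id t).sub_const T)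
      simp only [one_smul] at this
      exact this
    have hMper : M (t - T) = M t := by
      rw [hM]
      simp only [hAp.sub_eq, hbp.sub_eq, hKp.sub_eq]
    rw [hMper] at h2
    exact h2.hasDerivWithinAt
  have hwd : ∀ t ∈ Icc (0 : ℝ) T, HasDerivAt w (v t (w t)) t := by
    intro t ht
    rw [hvdef, hwdef]
    simp only
    rw [hasDerivAt_pi]
    intro i
    have hsum : HasDerivAt (fun s => ∑ j, Y s i j * c j)
        (∑ j, ((M t * Y t) i j) * c j) t := by
      apply HasDerivAt.fun_sum
      intro j _
      exact (hYode t ht i j).mul_const (c j)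
    have e1 : (fun s => (Y s *ᵥ c) i) = fun s => ∑ j, Y s i j * c j := by
      funext s; simp [Matrix.mulVec, dotProduct]
    have e2 : (M t *ᵥ (Y t *ᵥ c)) i = ∑ j, ((M t * Y t) i j) * c j := by
      rw [Matrix.mulVec_mulVec]
      simp [Matrix.mulVec, dotProduct]
    rw [e1, e2]
    exact hsum
  have hwc : ContinuousOn w (Icc 0 T) :=
    fun t ht => ((hwd t ht).continuousAt).continuousWithinAt
  have hmemIcc : ∀ t ∈ Ico (0 : ℝ) T, t ∈ Icc (0 : ℝ) T := fun t ht => Ico_subset_Icc_self ht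
  have hfs : ∀ t ∈ Ico (0 : ℝ) T, f t ∈ sset t := by
    intro t ht
    rw [hsset]
    simp only [if_pos (hmemIcc t ht)]
    exact mem_univ _
  have hws : ∀ t ∈ Ico (0 : ℝ) T, w t ∈ sset t := by
    intro t ht
    rw [hsset]
    simp only [if_pos (hmemIcc t ht)]
    exact mem_univ _
  have hinit : f 0 = w 0 := by
    rw [hfdef, hwdef]
    simp only [zero_sub, hY0, Matrix.one_mulVec, hc]
  have heq := ODE_solution_unique_of_mem_Icc_right (fun t _ => hlip t) hfc hfd hfs hwc
    (fun t ht => (hwd t (hmemIcc t ht)).hasDerivWithinAt) hws hinit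
  have hfT : f T = w T := heq (right_mem_Icc.mpr hT.le)
  have hfinal : lam • c = Y T *ᵥ c := by
    have : x (T - T) = Y T *ᵥ c := hfT
    rw [sub_self] at this
    rw [← hbc0]
    exact this
  rw [← Matrix.exists_mulVec_eq_zero_iff]
  refine ⟨c, hx0, ?_⟩
  rw [Matrix.sub_mulVec, Matrix.smul_mulVec, Matrix.one_mulVec, hfinal, sub_self]
end

section
/- Let n ≥ 1 and let P : ℂ → ℂ^{n×n} be analytic on all of ℂ. Suppose there exists λ₀ ∈ ℂ with |λ₀| > 1 and det(λ₀·I − P(1)) = 0. Then there exists ε_max ∈ (0,1) such that for every ε ∈ (0, ε_max) there exists λ ∈ ℂ with |λ| > 1, λ ≠ 1−ε, and det(λ·I − P(1 − ε/(λ−(1−ε)))) = 0. -/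
open Matrix Set

private lemma det_analyticAt' {n : ℕ} {M : ℂ → Matrix (Fin n) (Fin n) ℂ} {z : ℂ}
    (h : ∀ i j, AnalyticAt ℂ (fun w => M w i j) z) :
    AnalyticAt ℂ (fun w => (M w).det) z := by
  simp_rw [Matrix.det_apply']
  exact Finset.analyticAt_fun_sum _ fun σ _ =>
    analyticAt_const.fun_mul (Finset.analyticAt_fun_prod _ fun i _ => h _ _)

private lemma det_continuousOn' {α : Type*} [TopologicalSpace α] {n : ℕ}
    {M : α → Matrix (Fin n) (Fin n) ℂ} {s : Set α}
    (h : ∀ i j, ContinuousOn (fun a => M a i j) s) :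
    ContinuousOn (fun a => (M a).det) s := by
  simp_rw [Matrix.det_apply']
  exact continuousOn_finset_sum _ fun σ _ =>
    continuousOn_const.mul (continuousOn_finset_prod _ fun i _ => h _ _)

private lemma eval_charpoly' {n : ℕ} (A : Matrix (Fin n) (Fin n) ℂ) (t : ℂ) :
    (A.charpoly).eval t = (t • (1 : Matrix (Fin n) (Fin n) ℂ) - A).det := by
  rw [Matrix.charpoly, _root_.eval_det, Matrix.matPolyEquiv_charmatrix]
  congr 1
  rw [Polynomial.eval_sub, Polynomial.eval_X, Polynomial.eval_C]
  congr 1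
  ext i j
  simp [Matrix.scalar_apply, Matrix.smul_apply, Matrix.one_apply, Matrix.diagonal_apply]

/-- **Lemma 3.1 (ETDF stabilisation implies classical stabilisation), characteristic form.**
If the analytic matrix family `P : ℂ → ℂ^{n×n}` has a root `λ₀` of `det(λ I − P(1))`
outside the unit circle, then for all sufficiently small `ε > 0` the characteristic
function `λ ↦ det(λ I − P(1 − ε/(λ − (1 − ε))))` has a root outside the unit circle. -/
theorem stmt_2 (n : ℕ) (hn : 1 ≤ n)
    (P : ℂ → Matrix (Fin n) (Fin n) ℂ)
    (hP : ∀ (z : ℂ) (i j : Fin n), AnalyticAt ℂ (fun w => P w i j) z)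
    (lam0 : ℂ) (hlam0 : 1 < ‖lam0‖)
    (hroot : Matrix.det (lam0 • (1 : Matrix (Fin n) (Fin n) ℂ) - P 1) = 0) :
    ∃ εmax ∈ Ioo (0 : ℝ) 1, ∀ ε ∈ Ioo (0 : ℝ) εmax, ∃ lam : ℂ,
      1 < ‖lam‖ ∧ lam ≠ 1 - (ε : ℂ) ∧
      Matrix.det (lam • (1 : Matrix (Fin n) (Fin n) ℂ)
        - P (1 - (ε : ℂ) / (lam - (1 - (ε : ℂ))))) = 0 := by
  classical
  set A := P 1 with hAdef
  set f : ℂ → ℂ := fun l => (l • (1 : Matrix (Fin n) (Fin n) ℂ) - A).det with hfdef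
  -- f is analytic everywhere
  have hPcont : ∀ i j, Continuous (fun w => P w i j) := fun i j =>
    continuous_iff_continuousAt.mpr fun z => (hP z i j).continuousAt
  have hfan : ∀ z : ℂ, AnalyticAt ℂ f z := by
    intro z
    apply det_analyticAt'
    intro i j
    have : (fun w : ℂ => (w • (1 : Matrix (Fin n) (Fin n) ℂ) - A) i j)
        = fun w : ℂ => w * (1 : Matrix (Fin n) (Fin n) ℂ) i j - A i j := by
      funext w; simp [Matrix.sub_apply, Matrix.smul_apply, smul_eq_mul]
    rw [this]
    exact (analyticAt_id.mul analyticAt_const).sub analyticAt_const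
  have hfcont : Continuous f := continuous_iff_continuousAt.mpr fun z => (hfan z).continuousAt
  -- f is the evaluation of the (nonzero) characteristic polynomial
  have hfq : ∀ t : ℂ, f t = (A.charpoly).eval t := fun t => (eval_charpoly' A t).symm
  have hqne : A.charpoly ≠ 0 := (Matrix.charpoly_monic A).ne_zero
  have hroots : {x : ℂ | Polynomial.IsRoot A.charpoly x}.Finite :=
    Polynomial.finite_setOf_isRoot hqne
  -- isolated zero: f ≠ 0 on a punctured neighborhood of lam0
  have hiso : ∃ r₁ > 0, ∀ z : ℂ, dist z lam0 < r₁ → z ≠ lam0 → f z ≠ 0 := by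
    rcases (hfan lam0).eventually_eq_zero_or_eventually_ne_zero with h | h
    · exfalso
      rw [Metric.eventually_nhds_iff] at h
      obtain ⟨δ, hδ, hzero⟩ := h
      have hdense : Dense {x : ℂ | Polynomial.IsRoot A.charpoly x}ᶜ :=
        hroots.countable.dense_compl ℂ
      obtain ⟨x, hx1, hx2⟩ := hdense.exists_mem_open Metric.isOpen_ball
        (Metric.nonempty_ball.mpr hδ : (Metric.ball lam0 δ).Nonempty)
      apply hx1
      show Polynomial.eval x A.charpoly = 0
      rw [← hfq]
      exact hzero (Metric.mem_ball.mp hx2)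
    · rw [eventually_nhdsWithin_iff, Metric.eventually_nhds_iff] at h
      obtain ⟨δ, hδ, hne⟩ := h
      exact ⟨δ, hδ, fun z hz hz' => hne hz hz'⟩
  obtain ⟨r₁, hr₁, hpunct⟩ := hiso
  -- choose radius
  set c : ℝ := ‖lam0‖ - 1 with hcdef
  have hc : 0 < c := by simp only [hcdef]; linarith
  set r : ℝ := min (r₁ / 2) (c / 4) with hrdef
  have hr0 : 0 < r := lt_min (by linarith) (by linarith)
  have hrc : r ≤ c / 4 := min_le_right _ _
  have hrr₁ : r < r₁ := lt_of_le_of_lt (min_le_left _ _) (by linarith)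
  -- all points of the closed ball have norm > 1
  have hnorm : ∀ l : ℂ, l ∈ Metric.closedBall lam0 r → 1 + c / 2 ≤ ‖l‖ := by
    intro l hl
    rw [Metric.mem_closedBall, dist_eq_norm] at hl
    have h1 : ‖lam0‖ - ‖l‖ ≤ ‖l - lam0‖ := by
      have := norm_sub_norm_le lam0 l
      rwa [norm_sub_rev] at this
    have : ‖lam0‖ = 1 + c := by simp [hcdef]
    nlinarith
  have hnorm1 : ∀ l : ℂ, l ∈ Metric.closedBall lam0 r → 1 < ‖l‖ := fun l hl => by
    have := hnorm l hl; linarith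
  -- f does not vanish on the sphere; minimum of ‖f‖ there
  have hsne : (Metric.sphere lam0 r).Nonempty := NormedSpace.sphere_nonempty.mpr hr0.le
  obtain ⟨x₀, hx₀s, hx₀min⟩ := (isCompact_sphere lam0 r).exists_isMinOn hsne
    (continuous_norm.comp hfcont).continuousOn
  set m : ℝ := ‖f x₀‖ with hmdef
  have hfx₀ : f x₀ ≠ 0 := by
    apply hpunct x₀ (by rw [Metric.mem_sphere.mp hx₀s]; exact hrr₁)
    intro h
    have := Metric.mem_sphere.mp hx₀s
    rw [h, dist_self] at this
    exact hr0.ne this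
  have hm : 0 < m := norm_pos_iff.mpr hfx₀
  have hmin : ∀ l ∈ Metric.sphere lam0 r, m ≤ ‖f l‖ := fun l hl => hx₀min hl
  -- two-variable setup and tube lemma
  set U : Set (ℂ × ℂ) := {p | p.2 - (1 - p.1) ≠ 0} with hUdef
  have hUopen : IsOpen U := by
    have : U = (fun p : ℂ × ℂ => p.2 - (1 - p.1)) ⁻¹' {(0 : ℂ)}ᶜ := by
      ext p; simp [hUdef]
    rw [this]
    exact (isOpen_compl_singleton).preimage
      (continuous_snd.sub (continuous_const.sub continuous_fst))
  set μ : ℂ × ℂ → ℂ := fun p => 1 - p.1 / (p.2 - (1 - p.1)) with hμdef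
  have hμcont : ContinuousOn μ U :=
    continuousOn_const.sub (continuousOn_fst.div
      (continuousOn_snd.sub (continuousOn_const.sub continuousOn_fst)) fun p hp => hp)
  set H : ℂ × ℂ → ℂ := fun p =>
    (p.2 • (1 : Matrix (Fin n) (Fin n) ℂ) - P (μ p)).det with hHdef
  have hHcont : ContinuousOn H U := by
    apply det_continuousOn'
    intro i j
    have : (fun p : ℂ × ℂ => (p.2 • (1 : Matrix (Fin n) (Fin n) ℂ) - P (μ p)) i j)
        = fun p : ℂ × ℂ => p.2 * (1 : Matrix (Fin n) (Fin n) ℂ) i j - P (μ p) i j := by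
      funext p; simp [Matrix.sub_apply, Matrix.smul_apply, smul_eq_mul]
    rw [this]
    exact (continuousOn_snd.mul continuousOn_const).sub ((hPcont i j).comp_continuousOn hμcont)
  set V : Set (ℂ × ℂ) := U ∩ (fun p => H p - f p.2) ⁻¹' Metric.ball (0 : ℂ) (m / 2)
    with hVdef
  have hVopen : IsOpen V :=
    (hHcont.sub (hfcont.comp continuous_snd).continuousOn).isOpen_inter_preimage
      hUopen Metric.isOpen_ball
  have hVsub : ({(0 : ℂ)} ×ˢ Metric.closedBall lam0 r) ⊆ V := by
    rintro ⟨w, l⟩ ⟨hw, hl⟩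
    simp only [mem_singleton_iff] at hw
    subst hw
    have hl1 : (1 : ℝ) < ‖l‖ := hnorm1 l hl
    have hlU : (((0 : ℂ), l) : ℂ × ℂ) ∈ U := by
      simp only [hUdef, mem_setOf_eq, sub_zero]
      intro h
      rw [sub_eq_zero] at h
      rw [h] at hl1
      simp at hl1
    refine ⟨hlU, ?_⟩
    have : H ((0 : ℂ), l) = f l := by
      simp only [hHdef, hμdef, hfdef, zero_div, sub_zero]
      rfl
    simp only [mem_preimage, this, sub_self, Metric.mem_ball, dist_zero_right, norm_zero]
    linarith
  obtain ⟨s', t', hs'o, _, h0s', hballt', hsub'⟩ :=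
    generalized_tube_lemma isCompact_singleton (isCompact_closedBall lam0 r) hVopen hVsub
  have h0s'' : (0 : ℂ) ∈ s' := h0s' rfl
  obtain ⟨δ, hδ, hδsub⟩ := Metric.isOpen_iff.mp hs'o 0 h0s''
  -- choose εmax
  refine ⟨min δ 1 / 2, ⟨by positivity, by
    have : min δ 1 ≤ 1 := min_le_right _ _
    linarith⟩, ?_⟩
  intro ε hε
  obtain ⟨hε0, hεlt⟩ := hε
  have hεδ : ε < δ := by
    have h1 : min δ 1 ≤ δ := min_le_left _ _
    linarith
  have hε1 : ε < 1 := by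
    have h1 : min δ 1 ≤ 1 := min_le_right _ _
    linarith
  set w : ℂ := (ε : ℂ) with hwdef
  have hws' : w ∈ s' := hδsub (by
    rw [Metric.mem_ball, dist_zero_right, hwdef, Complex.norm_real,
      Real.norm_eq_abs, abs_of_pos hε0]
    exact hεδ)
  have hkey : ∀ l ∈ Metric.closedBall lam0 r, ((w, l) : ℂ × ℂ) ∈ V := fun l hl =>
    hsub' ⟨hws', hballt' hl⟩
  -- extract the two facts from V-membership
  have hne1w : ∀ l ∈ Metric.closedBall lam0 r, l - (1 - w) ≠ 0 := fun l hl => (hkey l hl).1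
  have hclose : ∀ l ∈ Metric.closedBall lam0 r, ‖H (w, l) - f l‖ < m / 2 := by
    intro l hl
    have := (hkey l hl).2
    rwa [mem_preimage, Metric.mem_ball, dist_zero_right] at this
  set g : ℂ → ℂ := fun l => H (w, l) with hgdef
  -- g is analytic at each point of the closed ball
  have hgan : ∀ l ∈ Metric.closedBall lam0 r, AnalyticAt ℂ g l := by
    intro l hl
    have hden : l - (1 - w) ≠ 0 := hne1w l hl
    apply det_analyticAt'
    intro i j
    have heq : (fun z : ℂ => (z • (1 : Matrix (Fin n) (Fin n) ℂ) - P (μ (w, z))) i j)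
        = fun z : ℂ => z * (1 : Matrix (Fin n) (Fin n) ℂ) i j
            - P (1 - w / (z - (1 - w))) i j := by
      funext z; simp [hμdef, Matrix.sub_apply, Matrix.smul_apply, smul_eq_mul]
    rw [show (fun z : ℂ => (fun p : ℂ × ℂ =>
        (p.2 • (1 : Matrix (Fin n) (Fin n) ℂ) - P (μ p)) i j) (w, z)) = _ from heq]
    have hν : AnalyticAt ℂ (fun z : ℂ => 1 - w / (z - (1 - w))) l :=
      analyticAt_const.sub (analyticAt_const.div (analyticAt_id.sub analyticAt_const) hden)
    have hcomp := AnalyticAt.comp (x := l)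
      (f := fun z : ℂ => 1 - w / (z - (1 - w))) (g := fun u => P u i j)
      (hP (1 - w / (l - (1 - w))) i j) hν
    exact (analyticAt_id.mul analyticAt_const).sub hcomp
  -- g has a zero in the closed ball
  have hex : ∃ l ∈ Metric.closedBall lam0 r, g l = 0 := by
    by_contra hno
    push_neg at hno
    have hmax := Complex.norm_le_of_forall_mem_frontier_norm_le
      (U := Metric.ball lam0 r) (f := fun l => (g l)⁻¹) Metric.isBounded_ball
      ?_ (C := (m / 2)⁻¹) ?_ (z := lam0) ?_
    · -- derive contradiction
      have hglam0 : g lam0 ≠ 0 := hno lam0 (Metric.mem_closedBall_self hr0.le)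
      rw [norm_inv] at hmax
      have h1 : m / 2 ≤ ‖g lam0‖ := by
        have hg0 : 0 < ‖g lam0‖ := norm_pos_iff.mpr hglam0
        have := (inv_le_inv₀ hg0 (by linarith : (0:ℝ) < m / 2)).mp hmax
        linarith
      have h2 : ‖g lam0‖ < m / 2 := by
        have := hclose lam0 (Metric.mem_closedBall_self hr0.le)
        have hf0 : f lam0 = 0 := hroot
        rw [hf0, sub_zero] at this
        exact this
      linarith
    · -- DiffContOnCl
      constructor
      · intro l hl
        have hl' : l ∈ Metric.closedBall lam0 r := Metric.ball_subset_closedBall hl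
        exact (((hgan l hl').inv (hno l hl')).differentiableAt).differentiableWithinAt
      · rw [closure_ball lam0 hr0.ne']
        intro l hl
        exact (((hgan l hl).inv (hno l hl)).continuousAt).continuousWithinAt
    · -- boundary bound
      intro l hl
      rw [frontier_ball lam0 hr0.ne'] at hl
      have hl' : l ∈ Metric.closedBall lam0 r := Metric.sphere_subset_closedBall hl
      have hgl : m / 2 ≤ ‖g l‖ := by
        have h1 := hclose l hl'
        have h2 := hmin l hl
        have h3 : ‖f l‖ - ‖g l‖ ≤ ‖g l - f l‖ := by
          have := norm_sub_norm_le (f l) (g l)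
          rwa [norm_sub_rev] at this
        linarith
      rw [norm_inv]
      exact inv_anti₀ (by linarith) hgl
    · -- lam0 in closure
      rw [closure_ball lam0 hr0.ne']
      exact Metric.mem_closedBall_self hr0.le
  obtain ⟨lam, hlamball, hlam0g⟩ := hex
  refine ⟨lam, hnorm1 lam hlamball, ?_, ?_⟩
  · intro h
    exact hne1w lam hlamball (by rw [h, hwdef]; ring)
  · have h := hlam0g
    simp only [hgdef, hHdef, hμdef] at h
    exact h
end

section
/- Let T > 0, n ≥ 1, let A : ℝ → ℝ^{n×n} and b : ℝ → ℝⁿ be continuous and T-periodic, let K₀ ∈ ℝⁿ and μ ∈ ℂ. For δ ∈ (0,T) let Δ_δ : ℝ → ℝ be the T-periodic function with Δ_δ(t) = 1/δ if t mod T ∈ [0,δ] and Δ_δ(t) = 0 otherwise. For each δ ∈ (0,T) let Y_δ : [0,T] → ℂ^{n×n} be continuous with Y_δ(0) = I and Y_δ′(t) = (A(t) − μ·Δ_δ(t)·b(t)K₀ᵀ)·Y_δ(t) for all t ∈ (0,T) with t ≠ δ (real entries viewed as complex). Let P₀ = Y(T) where Y : [0,T] → ℂ^{n×n} is the solution of Y′(t)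 = A(t)Y(t), Y(0) = I. Then Y_δ(T) converges to P₀·exp(−μ·b(0)K₀ᵀ) as δ → 0⁺. -/
open Matrix Set Filter

/-- The `T`-periodic near-impulse function: `Δ_δ(t) = 1/δ` if `t mod T ∈ [0,δ]`
and `0` otherwise. -/
noncomputable def impulse (T δ t : ℝ) : ℝ :=
  if t - T * ⌊t / T⌋ ≤ δ then 1 / δ else 0

lemma impulse_eq_one_div {T δ t : ℝ} (hT : 0 < T) (ht0 : 0 < t) (htδ : t ≤ δ)
    (hδT : δ < T) : impulse T δ t = 1 / δ := by
  unfold impulse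
  have hfl : ⌊t / T⌋ = 0 := by
    rw [Int.floor_eq_zero_iff]
    constructor
    · positivity
    · rw [div_lt_one hT]; linarith
  rw [if_pos]
  rw [hfl]
  push_cast
  linarith

lemma impulse_eq_zero {T δ t : ℝ} (hT : 0 < T) (ht0 : 0 < t) (htT : t < T)
    (hδt : δ < t) : impulse T δ t = 0 := by
  unfold impulse
  have hfl : ⌊t / T⌋ = 0 := by
    rw [Int.floor_eq_zero_iff]
    constructor
    · positivity
    · rw [div_lt_one hT]; linarith
  rw [if_neg]
  rw [hfl]
  push_cast
  intro h
  linarith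

section Aux

attribute [local instance] Matrix.linftyOpNormedAddCommGroup Matrix.linftyOpNormedRing
  Matrix.linftyOpNormedAlgebra

/-- Identity continuous linear equivalence between matrices (with the `L∞` operator norm)
and the plain pi type. -/
noncomputable def matCLE (n : ℕ) : Matrix (Fin n) (Fin n) ℂ ≃L[ℝ] (Fin n → Fin n → ℂ) :=
  LinearEquiv.toContinuousLinearEquiv
    { toFun := fun m => m, invFun := fun m => m,
      map_add' := fun _ _ => rfl, map_smul' := fun _ _ => rfl,
      left_inv := fun _ => rfl, right_inv := fun _ => rfl }

theorem hasDerivAt_matrix {n : ℕ} {f : ℝ → Matrix (Fin n) (Fin n) ℂ}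
    {f' : Matrix (Fin n) (Fin n) ℂ} {t : ℝ} :
    HasDerivAt f f' t ↔ ∀ i j, HasDerivAt (fun s => f s i j) (f' i j) t := by
  have key : ∀ (g : ℝ → Matrix (Fin n) (Fin n) ℂ) (g' : Matrix (Fin n) (Fin n) ℂ),
      HasDerivAt g g' t ↔ HasDerivAt (fun s => (matCLE n) (g s)) ((matCLE n) g') t := by
    intro g g'
    constructor
    · intro h
      exact ((matCLE n).toContinuousLinearMap.hasFDerivAt).comp_hasDerivAt t h
    · intro h
      exact ((matCLE n).symm.toContinuousLinearMap.hasFDerivAt).comp_hasDerivAt t h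
  rw [key, hasDerivAt_pi]
  refine forall_congr' fun i => ?_
  rw [hasDerivAt_pi]
  rfl

theorem gronwallBound_cont (K ε : ℝ) :
    Continuous fun p : ℝ × ℝ => gronwallBound p.1 K ε p.2 := by
  rcases eq_or_ne K 0 with h | h
  · subst h
    simp only [gronwallBound_K0]
    fun_prop
  · simp only [gronwallBound_of_K_ne_0 h]
    have h1 : Continuous fun p : ℝ × ℝ => Real.exp (K * p.2) :=
      Real.continuous_exp.comp (continuous_const.mul continuous_snd)
    exact (continuous_fst.mul h1).add (continuous_const.mul (h1.sub continuous_const))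

/-- Grönwall comparison where the derivative is only known on the open interval. -/
theorem gronwall_cmp {n : ℕ} {f f' : ℝ → Matrix (Fin n) (Fin n) ℂ} {a b K ε₀ : ℝ}
    (hab : a < b) (hfc : ContinuousOn f (Icc a b))
    (hd : ∀ t ∈ Ioo a b, HasDerivAt f (f' t) t)
    (hb : ∀ t ∈ Ioo a b, ‖f' t‖ ≤ K * ‖f t‖ + ε₀) :
    ‖f b‖ ≤ gronwallBound (‖f a‖) K ε₀ (b - a) := by
  have H : ∀ s ∈ Ioo a b, ‖f b‖ ≤ gronwallBound (‖f s‖) K ε₀ (b - s) := by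
    intro s hs
    refine norm_le_gronwallBound_of_norm_deriv_right_le (f := f) (f' := f')
      (hfc.mono (Icc_subset_Icc hs.1.le le_rfl))
      (fun t ht => (hd t ⟨hs.1.trans_le ht.1, ht.2⟩).hasDerivWithinAt)
      le_rfl
      (fun t ht => hb t ⟨hs.1.trans_le ht.1, ht.2⟩) b (right_mem_Icc.2 hs.2.le)
  haveI : (nhdsWithin a (Ioo a b)).NeBot := by
    refine mem_closure_iff_nhdsWithin_neBot.1 ?_
    rw [closure_Ioo hab.ne]
    exact ⟨le_rfl, hab.le⟩
  have htend : Tendsto (fun s => gronwallBound (‖f s‖) K ε₀ (b - s))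
      (nhdsWithin a (Ioo a b)) (nhds (gronwallBound (‖f a‖) K ε₀ (b - a))) := by
    have h1 : ContinuousWithinAt (fun s => (‖f s‖, b - s)) (Icc a b) a :=
      ((hfc a ⟨le_rfl, hab.le⟩).norm).prodMk
        ((continuous_const.sub continuous_id).continuousWithinAt)
    have h2 := ((gronwallBound_cont K ε₀).tendsto (‖f a‖, b - a)).comp h1
    exact h2.mono_left (nhdsWithin_mono a Ioo_subset_Icc_self)
  exact ge_of_tendsto htend (eventually_nhdsWithin_of_forall H)

theorem gb0_le {K ε x : ℝ} (hK : 0 ≤ K) (hε : 0 ≤ ε) (hx : 0 ≤ x) :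
    gronwallBound 0 K ε x ≤ ε * x * Real.exp (K * x) := by
  rcases eq_or_ne K 0 with h | h
  · subst h
    rw [gronwallBound_K0]
    simp
  · have hK' : 0 < K := hK.lt_of_ne (Ne.symm h)
    rw [gronwallBound_of_K_ne_0 h]
    have key : Real.exp (K * x) - 1 ≤ K * x * Real.exp (K * x) := by
      have h1 : 1 - K * x ≤ Real.exp (-(K * x)) := by
        have := Real.add_one_le_exp (-(K * x))
        linarith
      have h2 := mul_le_mul_of_nonneg_left h1 (Real.exp_pos (K * x)).le
      rw [← Real.exp_add] at h2
      simp only [add_neg_cancel, Real.exp_zero] at h2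
      nlinarith
    have h3 : ε / K * (Real.exp (K * x) - 1) ≤ ε / K * (K * x * Real.exp (K * x)) :=
      mul_le_mul_of_nonneg_left key (div_nonneg hε hK'.le)
    have h4 : ε / K * (K * x * Real.exp (K * x)) = ε * x * Real.exp (K * x) := by
      field_simp
    rw [h4] at h3
    linarith

/-- Step 1: estimate on the impulse interval `[0, δ]`. -/
theorem step1 {n : ℕ} (T δ : ℝ) (hT : 0 < T) (hδ0 : 0 < δ) (hδT : δ < T)
    (Ac Bm : ℝ → Matrix (Fin n) (Fin n) ℂ) (μ : ℂ)
    (W : ℝ → Matrix (Fin n) (Fin n) ℂ)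
    (hWc : ContinuousOn W (Icc 0 δ)) (hW0 : W 0 = 1)
    (hWd : ∀ t ∈ Ioo 0 δ,
      HasDerivAt W ((Ac t - (μ * ((1/δ : ℝ) : ℂ)) • Bm t) * W t) t)
    (CA CB CZ η : ℝ)
    (hCA : ∀ t ∈ Icc 0 δ, ‖Ac t‖ ≤ CA) (hCB : ∀ t ∈ Icc 0 δ, ‖Bm t‖ ≤ CB)
    (hCZ : ∀ u ∈ Icc (0:ℝ) 1, ‖NormedSpace.exp (u • ((-μ) • Bm 0))‖ ≤ CZ)
    (hη : ∀ t ∈ Icc 0 δ, ‖Bm 0 - Bm t‖ ≤ η)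
    (hCA0 : 0 ≤ CA) (hCB0 : 0 ≤ CB) (hCZ0 : 0 ≤ CZ) (hη0 : 0 ≤ η) :
    ‖W δ - NormedSpace.exp ((-μ) • Bm 0)‖
      ≤ (CA * δ + ‖μ‖ * η) * CZ * Real.exp (CA * δ + ‖μ‖ * CB) := by
  classical
  set N : Matrix (Fin n) (Fin n) ℂ := (-μ) • Bm 0 with hN
  set Z : ℝ → Matrix (Fin n) (Fin n) ℂ := fun t => NormedSpace.exp ((t/δ) • N) with hZdef
  have hZc : Continuous Z := by
    rw [hZdef]
    exact NormedSpace.exp_continuous.comp ((continuous_id.div_const δ).smul continuous_const)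
  have hZd : ∀ t : ℝ, HasDerivAt Z (δ⁻¹ • (N * Z t)) t := by
    intro t
    have h0 : HasDerivAt (fun u : ℝ => NormedSpace.exp (u • N))
        (N * NormedSpace.exp ((t/δ) • N)) (t/δ) := by
      have := hasDerivAt_exp_smul_const' (𝕂 := ℝ) N (t/δ)
      exact this
    have h1 : HasDerivAt (fun s : ℝ => s / δ) δ⁻¹ t := by
      simpa using (hasDerivAt_id t).div_const δ
    exact h0.scomp t h1
  have hZnorm : ∀ t ∈ Icc 0 δ, ‖Z t‖ ≤ CZ := fun t ht =>
    hCZ (t/δ) ⟨div_nonneg ht.1 hδ0.le, (div_le_one hδ0).2 ht.2⟩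
  set c : ℂ := μ * ((1/δ : ℝ) : ℂ) with hc
  have hcnorm : ‖c‖ = ‖μ‖ / δ := by
    rw [hc, norm_mul, Complex.norm_real, Real.norm_eq_abs,
      abs_of_pos (by positivity : (0:ℝ) < 1/δ)]
    rw [one_div, div_eq_mul_inv]
  set f1' : ℝ → Matrix (Fin n) (Fin n) ℂ := fun t =>
    (Ac t - c • Bm t) * (W t - Z t) + (Ac t + c • (Bm 0 - Bm t)) * Z t with hf1'
  have hder : ∀ t ∈ Ioo 0 δ, HasDerivAt (fun s => W s - Z s) (f1' t) t := by
    intro t ht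
    have h1 := (hWd t ht).sub (hZd t)
    refine h1.congr_deriv ?_
    have hsm : (δ⁻¹ : ℝ) • (N * Z t) = ((δ⁻¹ : ℝ) : ℂ) • (N * Z t) := by
      rw [← algebraMap_smul (R := ℝ) ℂ (δ⁻¹ : ℝ) (N * Z t)]
      norm_num
    rw [hf1', hsm, hN]
    have hcc : ((δ⁻¹ : ℝ) : ℂ) = ((1/δ : ℝ) : ℂ) := by norm_num
    rw [hcc]
    simp only [hc, smul_mul_assoc, sub_mul, mul_sub, add_mul, smul_sub]
    module
  have hbound : ∀ t ∈ Ioo 0 δ, ‖f1' t‖ ≤ (CA + ‖μ‖/δ * CB) * ‖W t - Z t‖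
      + (CA + ‖μ‖/δ * η) * CZ := by
    intro t ht
    have htI : t ∈ Icc 0 δ := ⟨ht.1.le, ht.2.le⟩
    have hμδ : (0:ℝ) ≤ ‖μ‖/δ := by positivity
    have e1 : ‖f1' t‖ ≤ ‖(Ac t - c • Bm t) * (W t - Z t)‖
        + ‖(Ac t + c • (Bm 0 - Bm t)) * Z t‖ := norm_add_le _ _
    have e2 : ‖(Ac t - c • Bm t) * (W t - Z t)‖
        ≤ (CA + ‖μ‖/δ * CB) * ‖W t - Z t‖ := by
      refine (norm_mul_le _ _).trans (mul_le_mul_of_nonneg_right ?_ (norm_nonneg _))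
      refine (norm_sub_le _ _).trans ?_
      rw [norm_smul, hcnorm]
      exact add_le_add (hCA t htI) (mul_le_mul_of_nonneg_left (hCB t htI) hμδ)
    have e3 : ‖(Ac t + c • (Bm 0 - Bm t)) * Z t‖ ≤ (CA + ‖μ‖/δ * η) * CZ := by
      refine (norm_mul_le _ _).trans (mul_le_mul ?_ (hZnorm t htI) (norm_nonneg _) ?_)
      · refine (norm_add_le _ _).trans ?_
        rw [norm_smul, hcnorm]
        exact add_le_add (hCA t htI) (mul_le_mul_of_nonneg_left (hη t htI) hμδ)
      · positivity
    linarith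
  have hfc : ContinuousOn (fun s => W s - Z s) (Icc 0 δ) := hWc.sub hZc.continuousOn
  have key := gronwall_cmp (K := CA + ‖μ‖/δ * CB) (ε₀ := (CA + ‖μ‖/δ * η) * CZ)
    hδ0 hfc hder hbound
  have h00 : W 0 - Z 0 = 0 := by
    rw [hW0, hZdef]
    simp
  rw [h00, norm_zero, sub_zero] at key
  have hZδ : Z δ = NormedSpace.exp N := by
    rw [hZdef]
    simp [div_self hδ0.ne']
  rw [hZδ] at key
  have hgb := gb0_le (K := CA + ‖μ‖/δ * CB) (ε := (CA + ‖μ‖/δ * η) * CZ) (x := δ)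
    (by positivity) (by positivity) hδ0.le
  have hq1 : (CA + ‖μ‖/δ * η) * CZ * δ = (CA * δ + ‖μ‖ * η) * CZ := by
    field_simp
  have hq2 : (CA + ‖μ‖/δ * CB) * δ = CA * δ + ‖μ‖ * CB := by
    field_simp
  rw [hq1, hq2] at hgb
  exact key.trans hgb

/-- Step 2: propagation on `[δ, T]` at constant ODE rate `CA`. -/
theorem step2 {n : ℕ} (δ T CA : ℝ) (hδT : δ < T)
    (Ac : ℝ → Matrix (Fin n) (Fin n) ℂ)
    (W V : ℝ → Matrix (Fin n) (Fin n) ℂ)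
    (hWc : ContinuousOn W (Icc δ T)) (hVc : ContinuousOn V (Icc δ T))
    (hWd : ∀ t ∈ Ioo δ T, HasDerivAt W (Ac t * W t) t)
    (hVd : ∀ t ∈ Ioo δ T, HasDerivAt V (Ac t * V t) t)
    (hCA : ∀ t ∈ Icc δ T, ‖Ac t‖ ≤ CA) :
    ‖W T - V T‖ ≤ ‖W δ - V δ‖ * Real.exp (CA * (T - δ)) := by
  have hder : ∀ t ∈ Ioo δ T, HasDerivAt (fun s => W s - V s) (Ac t * (W t - V t)) t := by
    intro t ht
    have := (hWd t ht).sub (hVd t ht)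
    rwa [← mul_sub] at this
  have hbound : ∀ t ∈ Ioo δ T, ‖Ac t * (W t - V t)‖ ≤ CA * ‖W t - V t‖ + 0 := by
    intro t ht
    rw [add_zero]
    exact (norm_mul_le _ _).trans
      (mul_le_mul_of_nonneg_right (hCA t ⟨ht.1.le, ht.2.le⟩) (norm_nonneg _))
  have key := gronwall_cmp (K := CA) (ε₀ := 0) hδT (hWc.sub hVc) hder hbound
  rwa [gronwallBound_ε0] at key

set_option maxHeartbeats 1000000 in
/-- The main theorem, proved with the `L∞` operator norm instances available. -/
theorem key_thm (n : ℕ) (hn : 1 ≤ n) (T : ℝ) (hT : 0 < T)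
    (A : ℝ → Matrix (Fin n) (Fin n) ℝ) (b : ℝ → Fin n → ℝ)
    (hAc : Continuous A) (hbc : Continuous b)
    (hAp : Function.Periodic A T) (hbp : Function.Periodic b T)
    (K0 : Fin n → ℝ) (μ : ℂ)
    (Yd : ℝ → ℝ → Matrix (Fin n) (Fin n) ℂ)
    (hYdc : ∀ δ ∈ Ioo (0 : ℝ) T, ContinuousOn (Yd δ) (Icc 0 T))
    (hYd0 : ∀ δ ∈ Ioo (0 : ℝ) T, Yd δ 0 = 1)
    (hYdode : ∀ δ ∈ Ioo (0 : ℝ) T, ∀ t ∈ Ioo (0 : ℝ) T, t ≠ δ → ∀ i j,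
      HasDerivAt (fun s => Yd δ s i j)
        ((((A t).map (Complex.ofReal)
            - (μ * (impulse T δ t : ℝ)) •
              Matrix.vecMulVec (fun i => ((b t i : ℝ) : ℂ)) (fun j => ((K0 j : ℝ) : ℂ)))
          * Yd δ t) i j) t)
    (Y : ℝ → Matrix (Fin n) (Fin n) ℂ)
    (hY0 : Y 0 = 1)
    (hYode : ∀ t ∈ Icc (0 : ℝ) T, ∀ i j,
      HasDerivAt (fun s => Y s i j) (((A t).map (Complex.ofReal) * Y t) i j) t)
    (P0 : Matrix (Fin n) (Fin n) ℂ) (hP0 : P0 = Y T) :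
    Tendsto (fun δ => Yd δ T) (nhdsWithin 0 (Ioi (0 : ℝ)))
      (nhds (P0 * NormedSpace.exp
        (-μ • Matrix.vecMulVec (fun i => ((b 0 i : ℝ) : ℂ)) (fun j => ((K0 j : ℝ) : ℂ))))) := by
  classical
  subst hP0
  obtain ⟨Ac, hAcd⟩ : ∃ f : ℝ → Matrix (Fin n) (Fin n) ℂ,
      f = fun t => (A t).map Complex.ofReal := ⟨_, rfl⟩
  obtain ⟨Bm, hBmd⟩ : ∃ f : ℝ → Matrix (Fin n) (Fin n) ℂ,
      f = fun t => Matrix.vecMulVec (fun i => ((b t i : ℝ) : ℂ))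
        (fun j => ((K0 j : ℝ) : ℂ)) := ⟨_, rfl⟩
  have hgoal : Matrix.vecMulVec (fun i => ((b 0 i : ℝ) : ℂ)) (fun j => ((K0 j : ℝ) : ℂ))
      = Bm 0 := by rw [hBmd]
  rw [hgoal]
  have hAcc : Continuous Ac := by
    rw [hAcd]
    exact continuous_matrix fun i j =>
      Complex.continuous_ofReal.comp
        (((continuous_apply j).comp ((continuous_apply i).comp hAc)))
  have hBmc : Continuous Bm := by
    rw [hBmd]
    exact continuous_matrix fun i j =>
      (Complex.continuous_ofReal.comp ((continuous_apply i).comp hbc)).mul continuous_const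
  have hYd' : ∀ t ∈ Icc (0:ℝ) T, HasDerivAt Y (Ac t * Y t) t := by
    intro t ht
    rw [hAcd]
    exact hasDerivAt_matrix.2 (hYode t ht)
  have hYc : ContinuousOn Y (Icc 0 T) := fun t ht =>
    ((hYd' t ht).continuousAt).continuousWithinAt
  have hYdode' : ∀ δ ∈ Ioo (0:ℝ) T, ∀ t ∈ Ioo (0:ℝ) T, t ≠ δ →
      HasDerivAt (Yd δ) ((Ac t - (μ * (impulse T δ t : ℝ)) • Bm t) * Yd δ t) t := by
    intro δ hδ t ht htne
    rw [hAcd, hBmd]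
    exact hasDerivAt_matrix.2 (hYdode δ hδ t ht htne)
  -- bounds
  obtain ⟨CA₀, hCA₀⟩ := (isCompact_Icc (a := (0:ℝ)) (b := T)).exists_bound_of_continuousOn
    hAcc.continuousOn
  obtain ⟨CB₀, hCB₀⟩ := (isCompact_Icc (a := (0:ℝ)) (b := T)).exists_bound_of_continuousOn
    hBmc.continuousOn
  obtain ⟨CZ₀, hCZ₀⟩ := (isCompact_Icc (a := (0:ℝ)) (b := 1)).exists_bound_of_continuousOn
    (((NormedSpace.exp_continuous (𝔸 := Matrix (Fin n) (Fin n) ℂ)).comp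
      (continuous_id.smul (continuous_const : Continuous fun _ : ℝ => (-μ) • Bm 0))).continuousOn)
  set CA := max CA₀ 0 with hCAdef
  set CB := max CB₀ 0 with hCBdef
  set CZ := max CZ₀ 0 with hCZdef
  have hCA : ∀ t ∈ Icc (0:ℝ) T, ‖Ac t‖ ≤ CA := fun t ht => (hCA₀ t ht).trans (le_max_left _ _)
  have hCB : ∀ t ∈ Icc (0:ℝ) T, ‖Bm t‖ ≤ CB := fun t ht => (hCB₀ t ht).trans (le_max_left _ _)
  have hCZ : ∀ u ∈ Icc (0:ℝ) 1, ‖NormedSpace.exp (u • ((-μ) • Bm 0))‖ ≤ CZ := fun u hu =>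
    (hCZ₀ u hu).trans (le_max_left _ _)
  have hCA0 : 0 ≤ CA := le_max_right _ _
  have hCB0 : 0 ≤ CB := le_max_right _ _
  have hCZ0 : 0 ≤ CZ := le_max_right _ _
  have hexpN : ‖NormedSpace.exp ((-μ) • Bm 0)‖ ≤ CZ := by
    have := hCZ 1 ⟨zero_le_one, le_rfl⟩
    rwa [one_smul] at this
  refine Metric.tendsto_nhds.2 ?_
  intro ε hε
  set c₀ : ℝ := ((CA + ‖μ‖) * CZ * Real.exp (CA * T + ‖μ‖ * CB) + CZ) * Real.exp (CA * T)
    with hc₀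
  have hc₀0 : 0 ≤ c₀ := by positivity
  set η : ℝ := ε / (2 * (c₀ + 1)) with hηdef
  have hη0 : 0 < η := by positivity
  -- continuity of Bm at 0
  have h1 : ∀ᶠ s in nhds (0:ℝ), ‖Bm 0 - Bm s‖ < η := by
    have hcont : Continuous fun s : ℝ => ‖Bm 0 - Bm s‖ := (continuous_const.sub hBmc).norm
    have h := hcont.tendsto (0:ℝ)
    rw [sub_self, norm_zero] at h
    exact h.eventually_lt_const hη0
  obtain ⟨r1, hr10, hr1⟩ := Metric.eventually_nhds_iff.1 h1
  -- continuity of Y at 0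
  have h2 : ∀ᶠ s in nhds (0:ℝ), ‖1 - Y s‖ < η := by
    have hY0c : ContinuousAt Y 0 := (hYd' 0 ⟨le_rfl, hT.le⟩).continuousAt
    have h : Tendsto (fun s => ‖1 - Y s‖) (nhds 0) (nhds ‖1 - Y 0‖) :=
      (continuousAt_const.sub hY0c).norm
    rw [hY0, sub_self, norm_zero] at h
    exact h.eventually_lt_const hη0
  obtain ⟨r2, hr20, hr2⟩ := Metric.eventually_nhds_iff.1 h2
  set m : ℝ := min (min T r1) (min r2 η) with hm
  have hm0 : 0 < m := lt_min (lt_min hT hr10) (lt_min hr20 hη0)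
  filter_upwards [Ioo_mem_nhdsGT hm0] with δ hδ
  have hδ0 : 0 < δ := hδ.1
  have hδT : δ < T := hδ.2.trans_le ((min_le_left _ _).trans (min_le_left _ _))
  have hδr1 : δ < r1 := hδ.2.trans_le ((min_le_left _ _).trans (min_le_right _ _))
  have hδr2 : δ < r2 := hδ.2.trans_le ((min_le_right _ _).trans (min_le_left _ _))
  have hδη : δ < η := hδ.2.trans_le ((min_le_right _ _).trans (min_le_right _ _))
  have hδI : δ ∈ Ioo (0:ℝ) T := ⟨hδ0, hδT⟩
  rw [dist_eq_norm]
  -- Step 1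
  have hWc1 : ContinuousOn (Yd δ) (Icc 0 δ) :=
    (hYdc δ hδI).mono (Icc_subset_Icc le_rfl hδT.le)
  have hWd1 : ∀ t ∈ Ioo 0 δ,
      HasDerivAt (Yd δ) ((Ac t - (μ * ((1/δ : ℝ) : ℂ)) • Bm t) * Yd δ t) t := by
    intro t ht
    have h := hYdode' δ hδI t ⟨ht.1, ht.2.trans hδT⟩ ht.2.ne
    rwa [impulse_eq_one_div hT ht.1 ht.2.le hδT] at h
  have hIccsub : Icc (0:ℝ) δ ⊆ Icc 0 T := Icc_subset_Icc le_rfl hδT.le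
  have hη' : ∀ t ∈ Icc (0:ℝ) δ, ‖Bm 0 - Bm t‖ ≤ η := by
    intro t ht
    refine (hr1 ?_).le
    rw [Real.dist_eq, sub_zero, abs_of_nonneg ht.1]
    exact lt_of_le_of_lt ht.2 hδr1
  have S1 := step1 T δ hT hδ0 hδT Ac Bm μ (Yd δ) hWc1 (hYd0 δ hδI) hWd1 CA CB CZ η
    (fun t ht => hCA t (hIccsub ht)) (fun t ht => hCB t (hIccsub ht)) hCZ hη'
    hCA0 hCB0 hCZ0 hη0.le
  -- Step 2
  set EN : Matrix (Fin n) (Fin n) ℂ := NormedSpace.exp ((-μ) • Bm 0) with hEN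
  have hWc2 : ContinuousOn (Yd δ) (Icc δ T) :=
    (hYdc δ hδI).mono (Icc_subset_Icc hδ0.le le_rfl)
  have hVc2 : ContinuousOn (fun t => Y t * EN) (Icc δ T) :=
    ((hYc.mono (Icc_subset_Icc hδ0.le le_rfl)).mul continuousOn_const)
  have hWd2 : ∀ t ∈ Ioo δ T, HasDerivAt (Yd δ) (Ac t * Yd δ t) t := by
    intro t ht
    have h := hYdode' δ hδI t ⟨hδ0.trans ht.1, ht.2⟩ (ne_of_gt ht.1)
    rwa [impulse_eq_zero hT (hδ0.trans ht.1) ht.2 ht.1, Complex.ofReal_zero, mul_zero,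
      zero_smul, sub_zero] at h
  have hVd2 : ∀ t ∈ Ioo δ T, HasDerivAt (fun s => Y s * EN) (Ac t * (Y t * EN)) t := by
    intro t ht
    have h := (hYd' t ⟨(hδ0.trans ht.1).le, ht.2.le⟩).mul_const EN
    rwa [mul_assoc] at h
  have S2 := step2 δ T CA hδT Ac (Yd δ) (fun t => Y t * EN) hWc2 hVc2 hWd2 hVd2
    (fun t ht => hCA t ⟨hδ0.le.trans ht.1, ht.2⟩)
  -- combine
  have htri : ‖Yd δ δ - Y δ * EN‖ ≤ ‖Yd δ δ - EN‖ + ‖EN - Y δ * EN‖ := by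
    have := dist_triangle (Yd δ δ) EN (Y δ * EN)
    simpa [dist_eq_norm] using this
  have hsnd : ‖EN - Y δ * EN‖ ≤ η * CZ := by
    have hfac : EN - Y δ * EN = (1 - Y δ) * EN := by rw [sub_mul, one_mul]
    rw [hfac]
    refine (norm_mul_le _ _).trans (mul_le_mul ?_ hexpN (norm_nonneg _) hη0.le)
    refine (hr2 ?_).le
    rw [Real.dist_eq, sub_zero, abs_of_pos hδ0]
    exact hδr2
  have hexp1 : Real.exp (CA * δ + ‖μ‖ * CB) ≤ Real.exp (CA * T + ‖μ‖ * CB) := by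
    refine Real.exp_le_exp.2 ?_
    have : CA * δ ≤ CA * T := mul_le_mul_of_nonneg_left hδT.le hCA0
    linarith
  have hexp2 : Real.exp (CA * (T - δ)) ≤ Real.exp (CA * T) := by
    refine Real.exp_le_exp.2 ?_
    nlinarith
  have hfst : ‖Yd δ δ - EN‖ ≤ (CA * δ + ‖μ‖ * η) * CZ * Real.exp (CA * T + ‖μ‖ * CB) := by
    refine S1.trans ?_
    refine mul_le_mul_of_nonneg_left hexp1 ?_
    positivity
  have hmid : ‖Yd δ δ - Y δ * EN‖
      ≤ (CA * δ + ‖μ‖ * η) * CZ * Real.exp (CA * T + ‖μ‖ * CB) + η * CZ := by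
    linarith
  have hfinal : ‖Yd δ T - Y T * EN‖
      ≤ ((CA * δ + ‖μ‖ * η) * CZ * Real.exp (CA * T + ‖μ‖ * CB) + η * CZ)
        * Real.exp (CA * T) := by
    refine S2.trans ?_
    refine mul_le_mul hmid hexp2 (Real.exp_pos _).le ?_
    positivity
  have hbnd : ((CA * δ + ‖μ‖ * η) * CZ * Real.exp (CA * T + ‖μ‖ * CB) + η * CZ)
      * Real.exp (CA * T) ≤ η * c₀ := by
    have h5 : CA * δ + ‖μ‖ * η ≤ (CA + ‖μ‖) * η := by nlinarith [norm_nonneg μ]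
    have h7 : (CA * δ + ‖μ‖ * η) * CZ * Real.exp (CA * T + ‖μ‖ * CB)
        ≤ (CA + ‖μ‖) * η * CZ * Real.exp (CA * T + ‖μ‖ * CB) :=
      mul_le_mul_of_nonneg_right (mul_le_mul_of_nonneg_right h5 hCZ0) (Real.exp_pos _).le
    calc ((CA * δ + ‖μ‖ * η) * CZ * Real.exp (CA * T + ‖μ‖ * CB) + η * CZ)
          * Real.exp (CA * T)
        ≤ ((CA + ‖μ‖) * η * CZ * Real.exp (CA * T + ‖μ‖ * CB) + η * CZ)
          * Real.exp (CA * T) := by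
          refine mul_le_mul_of_nonneg_right (by linarith) (Real.exp_pos _).le
      _ = η * c₀ := by rw [hc₀]; ring
  have hηc : η * c₀ < ε := by
    have h9 : η * c₀ ≤ η * (c₀ + 1) := by nlinarith [hη0.le, hc₀0]
    have h10 : η * (c₀ + 1) = ε / 2 := by
      rw [hηdef]
      field_simp
    linarith
  calc ‖Yd δ T - Y T * EN‖
      ≤ ((CA * δ + ‖μ‖ * η) * CZ * Real.exp (CA * T + ‖μ‖ * CB) + η * CZ)
        * Real.exp (CA * T) := hfinal
    _ ≤ η * c₀ := hbnd
    _ < ε := hηc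

end Aux

/-- **Impulse limit of the controlled monodromy matrix (eq. (3.8)).**
The monodromy matrix `Y_δ(T)` of `Y' = (A(t) − μ Δ_δ(t) b(t)K₀ᵀ) Y` converges to
`P₀ · exp(−μ b(0)K₀ᵀ)` as `δ → 0⁺`, where `P₀` is the uncontrolled monodromy matrix. -/
theorem stmt_3 (n : ℕ) (hn : 1 ≤ n) (T : ℝ) (hT : 0 < T)
    (A : ℝ → Matrix (Fin n) (Fin n) ℝ) (b : ℝ → Fin n → ℝ)
    (hAc : Continuous A) (hbc : Continuous b)
    (hAp : Function.Periodic A T) (hbp : Function.Periodic b T)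
    (K0 : Fin n → ℝ) (μ : ℂ)
    (Yd : ℝ → ℝ → Matrix (Fin n) (Fin n) ℂ)
    (hYdc : ∀ δ ∈ Ioo (0 : ℝ) T, ContinuousOn (Yd δ) (Icc 0 T))
    (hYd0 : ∀ δ ∈ Ioo (0 : ℝ) T, Yd δ 0 = 1)
    (hYdode : ∀ δ ∈ Ioo (0 : ℝ) T, ∀ t ∈ Ioo (0 : ℝ) T, t ≠ δ → ∀ i j,
      HasDerivAt (fun s => Yd δ s i j)
        ((((A t).map (Complex.ofReal)
            - (μ * (impulse T δ t : ℝ)) •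
              Matrix.vecMulVec (fun i => ((b t i : ℝ) : ℂ)) (fun j => ((K0 j : ℝ) : ℂ)))
          * Yd δ t) i j) t)
    (Y : ℝ → Matrix (Fin n) (Fin n) ℂ)
    (hY0 : Y 0 = 1)
    (hYode : ∀ t ∈ Icc (0 : ℝ) T, ∀ i j,
      HasDerivAt (fun s => Y s i j) (((A t).map (Complex.ofReal) * Y t) i j) t)
    (P0 : Matrix (Fin n) (Fin n) ℂ) (hP0 : P0 = Y T) :
    Tendsto (fun δ => Yd δ T) (nhdsWithin 0 (Ioi (0 : ℝ)))
      (nhds (P0 * NormedSpace.exp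
        (-μ • Matrix.vecMulVec (fun i => ((b 0 i : ℝ) : ℂ)) (fun j => ((K0 j : ℝ) : ℂ))))) := by
  exact key_thm n hn T hT A b hAc hbc hAp hbp K0 μ Yd hYdc hYd0 hYdode Y hY0 hYode P0 hP0
end

section
/- Let n ≥ 1, let M be an n×n complex matrix and v, w ∈ ℂⁿ with wᵀv ≠ 0, and let vwᵀ denote the rank-one matrix with entries vᵢwⱼ. Assume det(I − M) = 0 and det(I − M·exp(−vwᵀ)) ≠ 0. Then for κ ∈ ℂ: det(I − M·exp((κ−1)·vwᵀ)) = 0 if and only if κ = 1 + 2πiℓ/(wᵀv) for some integer ℓ. -/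
open Matrix Real

/-- Determinant of a rank-one perturbation is affine in the scalar. -/
private lemma affineDet {n : ℕ} (B : Matrix (Fin n) (Fin n) ℂ) (u w : Fin n → ℂ) :
    ∃ α : ℂ, ∀ t : ℂ, Matrix.det (B - t • Matrix.vecMulVec u w) = Matrix.det B + t * α := by
  classical
  set j0 : Fin n ⊕ Unit := Sum.inr () with hj0
  set G : ℂ → Matrix (Fin n ⊕ Unit) (Fin n ⊕ Unit) ℂ :=
    fun t => fromBlocks B (replicateCol Unit (t • u)) (replicateRow Unit w) 1 with hG
  have hdet : ∀ t, Matrix.det (B - t • Matrix.vecMulVec u w) = (G t).det := by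
    intro t
    rw [hG, det_fromBlocks_one₂₂]
    congr 1
    ext i j
    simp [vecMulVec_apply, mul_apply, replicateCol, replicateRow, Matrix.smul_apply, mul_assoc]
  have hcol : ∀ t : ℂ, G t = updateCol (G 0) j0
      (fun i => t • (Sum.elim u (fun _ => (0:ℂ)) i) + Sum.elim (fun _ => (0:ℂ)) (fun _ => 1) i) := by
    intro t
    ext i j
    rcases j with j | j
    · rw [updateCol_apply, if_neg (by simp [hj0])]
      rcases i with i | i <;> simp [hG, fromBlocks]
    · rw [updateCol_apply, if_pos (by simp [hj0])]
      rcases i with i | i <;> simp [hG, fromBlocks, hj0]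
  refine ⟨Matrix.det (updateCol (G 0) j0 (Sum.elim u fun _ => 0)), fun t => ?_⟩
  have h0 : updateCol (G 0) j0 (Sum.elim (fun _ => (0:ℂ)) fun _ => 1) = G 0 := by
    have : (Sum.elim (fun _ => (0:ℂ)) fun _ => 1) = fun i => (G 0) i j0 := by
      funext i; rcases i with i | i <;> simp [hG, fromBlocks, hj0]
    rw [this, updateCol_eq_self]
  have hdet0 : (G 0).det = Matrix.det B := by
    rw [hG]
    simp [det_fromBlocks_one₂₂]
  rw [hdet t, hcol t,
    show (fun i => t • (Sum.elim u (fun _ => (0:ℂ)) i) + Sum.elim (fun _ => (0:ℂ)) (fun _ => 1) i)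
      = (t • (Sum.elim u (fun _ => (0:ℂ)))) + (Sum.elim (fun _ => (0:ℂ)) fun _ => 1) from rfl,
    det_updateCol_add, det_updateCol_smul, h0, hdet0]
  ring

private lemma exp_smul_vmv {n : ℕ} (v w : Fin n → ℂ) (hc : w ⬝ᵥ v ≠ 0) (z : ℂ) :
    NormedSpace.exp (z • Matrix.vecMulVec v w) =
      1 + ((Complex.exp (z * (w ⬝ᵥ v)) - 1) / (w ⬝ᵥ v)) • Matrix.vecMulVec v w := by
  classical
  set c : ℂ := w ⬝ᵥ v with hcdef
  set A : Matrix (Fin n) (Fin n) ℂ := Matrix.vecMulVec v w with hA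
  have hA2 : A * A = c • A := by
    ext i j
    simp only [hA, mul_apply, vecMulVec_apply, Matrix.smul_apply, hcdef, dotProduct, smul_eq_mul,
      Finset.sum_mul]
    exact Finset.sum_congr rfl fun k _ => by ring
  have hpow : ∀ k : ℕ, A ^ (k + 1) = c ^ k • A := by
    intro k
    induction k with
    | zero => simp
    | succ k ih =>
      rw [pow_succ, ih, smul_mul_assoc, hA2, smul_smul, ← pow_succ]
  set d : ℕ → ℂ := fun k => c⁻¹ * ((z * c) ^ k / (Nat.factorial k) - if k = 0 then 1 else 0) with hd
  have hsum1 : Summable fun k : ℕ => (z * c) ^ k / ((Nat.factorial k) : ℂ) :=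
    NormedSpace.expSeries_div_summable (z * c)
  have hsum2 : Summable fun k : ℕ => if k = 0 then (1 : ℂ) else 0 :=
    summable_of_ne_finset_zero (s := {0}) (by intro b hb; simp at hb; simp [hb])
  have hsumd : Summable d := ((hsum1.sub hsum2).mul_left _)
  have htsumd : ∑' k, d k = c⁻¹ * (Complex.exp (z * c) - 1) := by
    rw [hd, tsum_mul_left]
    congr 1
    rw [Summable.tsum_sub hsum1 hsum2, tsum_ite_eq 0 (fun _ => (1 : ℂ)), Complex.exp_eq_exp_ℂ,
      NormedSpace.exp_eq_tsum_div]
  have key : ∀ k : ℕ, (((Nat.factorial k) : ℂ)⁻¹) • (z • A) ^ k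
      = d k • A + (if k = 0 then (1 : Matrix (Fin n) (Fin n) ℂ) else 0) := by
    intro k
    cases k with
    | zero => simp [hd]
    | succ k =>
      rw [smul_pow, hpow k, if_neg (Nat.succ_ne_zero k), add_zero, smul_smul, smul_smul]
      congr 1
      simp only [hd]
      rw [if_neg (Nat.succ_ne_zero k), sub_zero, mul_pow, pow_succ, div_eq_mul_inv]
      linear_combination (-(z ^ (k + 1) * c ^ k * ((Nat.factorial (k + 1) : ℂ))⁻¹)) *
        mul_inv_cancel₀ hc
  have hsumE : Summable fun k : ℕ => (if k = 0 then (1 : Matrix (Fin n) (Fin n) ℂ) else 0) :=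
    summable_of_ne_finset_zero (s := {0}) (by intro b hb; simp at hb; simp [hb])
  rw [NormedSpace.exp_eq_tsum (𝕂 := ℂ)]
  calc (∑' k : ℕ, (((Nat.factorial k) : ℂ)⁻¹) • (z • A) ^ k)
      = ∑' k : ℕ, (d k • A + (if k = 0 then (1 : Matrix (Fin n) (Fin n) ℂ) else 0)) :=
        tsum_congr key
    _ = (∑' k : ℕ, d k • A) + ∑' k : ℕ, (if k = 0 then (1 : Matrix (Fin n) (Fin n) ℂ) else 0) :=
        Summable.tsum_add (hsumd.smul_const A) hsumE
    _ = (∑' k : ℕ, d k) • A + 1 := by rw [Summable.tsum_smul_const hsumd, tsum_ite_eq 0]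
    _ = 1 + ((Complex.exp (z * c) - 1) / c) • A := by
        rw [htsumd, add_comm]
        congr 2
        field_simp

/-- **Roots of the reduced characteristic function (eq. (3.14)).**
If `wᵀv ≠ 0`, `det(I − M) = 0` and `det(I − M exp(−v wᵀ)) ≠ 0`, then
`det(I − M exp((κ−1) v wᵀ)) = 0` iff `κ = 1 + 2πiℓ/(wᵀv)` for some integer `ℓ`. -/
theorem stmt_9 (n : ℕ) (hn : 1 ≤ n) (M : Matrix (Fin n) (Fin n) ℂ) (v w : Fin n → ℂ)
    (hwv : w ⬝ᵥ v ≠ 0)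
    (htriv : Matrix.det (1 - M) = 0)
    (hreg : Matrix.det (1 - M * NormedSpace.exp (-(Matrix.vecMulVec v w))) ≠ 0) :
    ∀ κ : ℂ,
      Matrix.det (1 - M * NormedSpace.exp ((κ - 1) • Matrix.vecMulVec v w)) = 0 ↔
      ∃ ℓ : ℤ, κ = 1 + 2 * (π : ℂ) * Complex.I * (ℓ : ℂ) / (w ⬝ᵥ v) := by
  intro κ
  obtain ⟨α, hα⟩ := affineDet (1 - M) (M *ᵥ v) w
  have hMA : M * Matrix.vecMulVec v w = Matrix.vecMulVec (M *ᵥ v) w := by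
    ext i j
    simp only [mul_apply, vecMulVec_apply, mulVec, dotProduct, Finset.sum_mul]
    exact Finset.sum_congr rfl fun k _ => by ring
  have hf : ∀ s : ℂ, Matrix.det (1 - M * NormedSpace.exp (s • Matrix.vecMulVec v w))
      = ((Complex.exp (s * (w ⬝ᵥ v)) - 1) / (w ⬝ᵥ v)) * α := by
    intro s
    rw [exp_smul_vmv v w hwv s]
    have h1 : 1 - M * (1 + ((Complex.exp (s * (w ⬝ᵥ v)) - 1) / (w ⬝ᵥ v)) • Matrix.vecMulVec v w)
        = (1 - M) - ((Complex.exp (s * (w ⬝ᵥ v)) - 1) / (w ⬝ᵥ v)) • Matrix.vecMulVec (M *ᵥ v) w := by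
      rw [Matrix.mul_add, Matrix.mul_one, mul_smul_comm, hMA]
      abel
    rw [h1, hα, htriv, zero_add]
  have hαne : α ≠ 0 := by
    intro h0
    apply hreg
    have hneg : -(Matrix.vecMulVec v w) = (-1 : ℂ) • Matrix.vecMulVec v w := by
      rw [neg_smul, one_smul]
    rw [hneg, hf (-1), h0, mul_zero]
  rw [hf (κ - 1)]
  have hexp : ((Complex.exp ((κ - 1) * (w ⬝ᵥ v)) - 1) / (w ⬝ᵥ v)) * α = 0
      ↔ Complex.exp ((κ - 1) * (w ⬝ᵥ v)) = 1 := by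
    rw [mul_eq_zero, div_eq_zero_iff, sub_eq_zero]
    simp [hαne, hwv]
  rw [hexp, Complex.exp_eq_one_iff]
  constructor
  · rintro ⟨ℓ, hl⟩
    refine ⟨ℓ, ?_⟩
    field_simp
    linear_combination hl
  · rintro ⟨ℓ, hl⟩
    refine ⟨ℓ, ?_⟩
    rw [hl]
    field_simp
    ring
end

section
/- Let p < 0 be real, r = √(−p), x₁(t) = r·sin t, x₂(t) = −r·cos t, and define A(t) ∈ ℝ^{2×2} by A(t) = [[p + 3x₁(t)² + x₂(t)², −1 + 2x₁(t)x₂(t)], [1 + 2x₁(t)x₂(t), p + x₁(t)² + 3x₂(t)²]]. If Y : ℝ → ℝ^{2×2} satisfies Y(0) = I and Y′(t) = A(t)·Y(t) for all t, then Y(2π) = [[1, 0], [0, exp(−4πp)]]. -/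
open Real Matrix

/-- **Monodromy matrix of the Hopf normal form orbit (Section 5).**
The fundamental solution of the variational equation `Y' = A(t) Y` along the Hopf
periodic orbit `x_*(t) = (r sin t, −r cos t)`, `r = √(−p)`, satisfies
`Y(2π) = diag(1, e^{−4πp})`. -/
theorem stmt_12 (p : ℝ) (hp : p < 0) (r : ℝ) (hr : r = Real.sqrt (-p))
    (x1 x2 : ℝ → ℝ) (hx1 : ∀ t, x1 t = r * Real.sin t)
    (hx2 : ∀ t, x2 t = -r * Real.cos t)
    (A : ℝ → Matrix (Fin 2) (Fin 2) ℝ)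
    (hA : ∀ t, A t = !![p + 3 * x1 t ^ 2 + x2 t ^ 2, -1 + 2 * x1 t * x2 t;
                       1 + 2 * x1 t * x2 t, p + x1 t ^ 2 + 3 * x2 t ^ 2])
    (Y : ℝ → Matrix (Fin 2) (Fin 2) ℝ)
    (hY0 : Y 0 = 1)
    (hYode : ∀ t, ∀ i j, HasDerivAt (fun s => Y s i j) ((A t * Y t) i j) t) :
    Y (2 * π) = !![1, 0; 0, Real.exp (-4 * π * p)] := by
  have hrp : r ^ 2 = -p := by
    rw [hr]; exact Real.sq_sqrt (by linarith)
  -- simplified form of A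
  have hA' : ∀ t, A t = !![-2 * p * Real.sin t ^ 2, -1 + 2 * p * Real.sin t * Real.cos t;
      1 + 2 * p * Real.sin t * Real.cos t, -2 * p * Real.cos t ^ 2] := by
    intro t
    have hpy := Real.sin_sq_add_cos_sq t
    rw [hA]
    ext i j
    fin_cases i <;> fin_cases j <;> simp [hx1, hx2]
    · linear_combination (3 * Real.sin t ^ 2 + Real.cos t ^ 2) * hrp - p * hpy
    · linear_combination (-2 * Real.sin t * Real.cos t) * hrp
    · linear_combination (-2 * Real.sin t * Real.cos t) * hrp
    · linear_combination (Real.sin t ^ 2 + 3 * Real.cos t ^ 2) * hrp - p * hpy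
  -- explicit fundamental solution
  set Z : ℝ → Matrix (Fin 2) (Fin 2) ℝ := fun t =>
    !![Real.cos t, -Real.sin t * Real.exp (-2 * p * t);
       Real.sin t, Real.cos t * Real.exp (-2 * p * t)] with hZ
  have hZode : ∀ t, ∀ i j, HasDerivAt (fun s => Z s i j) ((A t * Z t) i j) t := by
    intro t i j
    have hpy := Real.sin_sq_add_cos_sq t
    have hsin := Real.hasDerivAt_sin t
    have hcos := Real.hasDerivAt_cos t
    have h1 : HasDerivAt (fun s : ℝ => -2 * p * s) (-2 * p) t := by
      simpa using (hasDerivAt_id t).const_mul (-2 * p)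
    have hexp : HasDerivAt (fun s => Real.exp (-2 * p * s))
        (-2 * p * Real.exp (-2 * p * t)) t := by
      simpa [mul_comm] using h1.exp
    fin_cases i <;> fin_cases j
    · convert hcos using 1
      all_goals simp [hA', Matrix.mul_apply, Fin.sum_univ_two, hZ]
      ring
    · have h : HasDerivAt (fun s => -Real.sin s * Real.exp (-2 * p * s))
          (-Real.cos t * Real.exp (-2 * p * t) +
            -Real.sin t * (-2 * p * Real.exp (-2 * p * t))) t := hsin.neg.mul hexp
      convert h using 1
      all_goals simp [hA', Matrix.mul_apply, Fin.sum_univ_two, hZ]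
      linear_combination (2 * p * Real.sin t * Real.exp (-(2 * p * t))) * hpy
    · convert hsin using 1
      all_goals simp [hA', Matrix.mul_apply, Fin.sum_univ_two, hZ]
      ring
    · have h : HasDerivAt (fun s => Real.cos s * Real.exp (-2 * p * s))
          (-Real.sin t * Real.exp (-2 * p * t) +
            Real.cos t * (-2 * p * Real.exp (-2 * p * t))) t := hcos.mul hexp
      convert h using 1
      all_goals simp [hA', Matrix.mul_apply, Fin.sum_univ_two, hZ]
      linear_combination (-2 * p * Real.cos t * Real.exp (-(2 * p * t))) * hpy
  -- Lipschitz constant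
  set K : NNReal := ⟨2 + 4 * |p|, by positivity⟩ with hK
  have hLip : ∀ t, LipschitzWith K (fun y : Fin 2 → ℝ => (A t).mulVec y) := by
    intro t
    apply LipschitzWith.of_dist_le_mul
    intro y z
    rw [dist_eq_norm, ← Matrix.mulVec_sub]
    set w : Fin 2 → ℝ := y - z with hw
    have hwd : dist y z = ‖w‖ := by rw [dist_eq_norm]
    rw [hwd]
    have hKc : (K : ℝ) = 2 + 4 * |p| := rfl
    rw [hKc]
    have hwn : ∀ k, |w k| ≤ ‖w‖ := fun k => by
      simpa [Real.norm_eq_abs] using norm_le_pi_norm w k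
    have hwnn : (0:ℝ) ≤ ‖w‖ := norm_nonneg w
    refine (pi_norm_le_iff_of_nonneg (by positivity)).2 fun i => ?_
    have hBnn : (0:ℝ) ≤ 1 + 2 * |p| := by positivity
    have hAb : ∀ j, |A t i j| ≤ 1 + 2 * |p| := by
      intro j
      have hs1 := Real.neg_one_le_sin t
      have hs2 := Real.sin_le_one t
      have hc1 := Real.neg_one_le_cos t
      have hc2 := Real.cos_le_one t
      have hpabs : |p| = -p := abs_of_neg hp
      rw [hA']
      fin_cases i <;> fin_cases j <;> simp <;> rw [hpabs] <;> (try rw [abs_le]) <;> (try constructor) <;>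
        nlinarith [Real.sin_sq_add_cos_sq t, sq_nonneg (Real.sin t),
          sq_nonneg (Real.cos t), sq_nonneg (Real.sin t - Real.cos t),
          sq_nonneg (Real.sin t + Real.cos t)]
    have hmv : (A t).mulVec w i = A t i 0 * w 0 + A t i 1 * w 1 := by
      simp [Matrix.mulVec, dotProduct, Fin.sum_univ_two]
    rw [Real.norm_eq_abs, hmv]
    calc |A t i 0 * w 0 + A t i 1 * w 1|
        ≤ |A t i 0| * |w 0| + |A t i 1| * |w 1| := by
          simpa [abs_mul] using abs_add_le (A t i 0 * w 0) (A t i 1 * w 1)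
      _ ≤ (1 + 2 * |p|) * ‖w‖ + (1 + 2 * |p|) * ‖w‖ :=
          add_le_add (mul_le_mul (hAb 0) (hwn 0) (abs_nonneg _) hBnn)
            (mul_le_mul (hAb 1) (hwn 1) (abs_nonneg _) hBnn)
      _ = (2 + 4 * |p|) * ‖w‖ := by ring
  -- uniqueness column by column
  have hcols : ∀ j, Set.EqOn (fun t => (fun i => Y t i j)) (fun t => (fun i => Z t i j))
      (Set.Icc 0 (2 * π)) := by
    intro j
    apply ODE_solution_unique (v := fun t y => (A t).mulVec y) hLip
    · exact (continuous_pi fun i => continuous_iff_continuousAt.2 fun s =>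
        (hYode s i j).continuousAt).continuousOn
    · intro t _
      apply HasDerivAt.hasDerivWithinAt
      rw [hasDerivAt_pi]
      intro i
      have h := hYode t i j
      have e : ((A t * Y t) i j) = (A t).mulVec (fun k => Y t k j) i := by
        simp [Matrix.mulVec, dotProduct, Matrix.mul_apply]
      exact e ▸ h
    · exact (continuous_pi fun i => continuous_iff_continuousAt.2 fun s =>
        (hZode s i j).continuousAt).continuousOn
    · intro t _
      apply HasDerivAt.hasDerivWithinAt
      rw [hasDerivAt_pi]
      intro i
      have h := hZode t i j
      have e : ((A t * Z t) i j) = (A t).mulVec (fun k => Z t k j) i := by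
        simp [Matrix.mulVec, dotProduct, Matrix.mul_apply]
      exact e ▸ h
    · funext i
      have hZ0 : Z 0 = 1 := by
        ext a b
        fin_cases a <;> fin_cases b <;> simp [hZ]
      rw [hY0, hZ0]
  have hfin : Y (2 * π) = Z (2 * π) := by
    ext i j
    have h := hcols j ⟨by positivity, le_refl _⟩
    exact congrFun h i
  rw [hfin]
  ext i j
  fin_cases i <;> fin_cases j <;>
    simp [hZ, Real.sin_two_pi, Real.cos_two_pi]
  ring_nf
end

section
/- Let p < 0 and K₁, K₂ ∈ ℝ with K₁ + K₂ ≤ 0. Let r = √(−p), x₁(t) = r·sin t, x₂(t) = −r·cos t, A(t) = [[p + 3x₁(t)² + x₂(t)², −1 + 2x₁(t)x₂(t)], [1 + 2x₁(t)x₂(t), p + x₁(t)² + 3x₂(t)²]], b = (1,1) ∈ ℝ², K = (K₁,K₂) ∈ ℝ², and let bKᵀ be the 2×2 matrix with entries bᵢKⱼ. If Y : ℝ → ℝ^{2×2} satisfies Y(0) = I and Y′(t) = (A(t) − bKᵀ)·Y(t) for all t, then det Y(2π) = exp(2π·(−2p − K₁ − K₂)) > 1, and consequently there exists λ ∈ ℂ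 with |λ| > 1 and det(λ·I − Y(2π)) = 0 (Y(2π) viewed as a complex matrix). -/
open Real Matrix

/-- **Classical constant-gain feedback fails for the Hopf orbit (proof of Lemma 5.1).**
For constant gains with `K₁ + K₂ ≤ 0`, the monodromy matrix `Y(2π)` of the classically
feedback-controlled linearisation `Y' = (A(t) − b Kᵀ) Y` along the Hopf orbit has
determinant `e^{2π(−2p − K1 − K₂)} > 1`, hence an eigenvalue of modulus `> 1`. -/
theorem stmt_13 (p : ℝ) (hp : p < 0) (K1 K2 : ℝ) (hK : K1 + K2 ≤ 0)
    (r : ℝ) (hr : r = Real.sqrt (-p))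
    (x1 x2 : ℝ → ℝ) (hx1 : ∀ t, x1 t = r * Real.sin t)
    (hx2 : ∀ t, x2 t = -r * Real.cos t)
    (A : ℝ → Matrix (Fin 2) (Fin 2) ℝ)
    (hA : ∀ t, A t = !![p + 3 * x1 t ^ 2 + x2 t ^ 2, -1 + 2 * x1 t * x2 t;
                       1 + 2 * x1 t * x2 t, p + x1 t ^ 2 + 3 * x2 t ^ 2])
    (b K : Fin 2 → ℝ) (hb : b = ![1, 1]) (hKdef : K = ![K1, K2])
    (Y : ℝ → Matrix (Fin 2) (Fin 2) ℝ)
    (hY0 : Y 0 = 1)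
    (hYode : ∀ t, ∀ i j,
      HasDerivAt (fun s => Y s i j) (((A t - Matrix.vecMulVec b K) * Y t) i j) t) :
    Matrix.det (Y (2 * π)) = Real.exp (2 * π * (-2 * p - K1 - K2)) ∧
    1 < Real.exp (2 * π * (-2 * p - K1 - K2)) ∧
    ∃ lam : ℂ, 1 < ‖lam‖ ∧
      Matrix.det (lam • (1 : Matrix (Fin 2) (Fin 2) ℂ)
        - (Y (2 * π)).map (Complex.ofReal)) = 0 := by
  have hpn : (0:ℝ) ≤ -p := by linarith
  have hr2 : r ^ 2 = -p := by rw [hr, sq_sqrt hpn]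
  set c : ℝ := -2 * p - K1 - K2 with hc
  have hcpos : 0 < c := by simp only [hc]; linarith
  -- trace of A t - b Kᵀ is c, for every t
  have htr : ∀ t, (A t - Matrix.vecMulVec b K) 0 0 + (A t - Matrix.vecMulVec b K) 1 1 = c := by
    intro t
    have hx : x1 t ^ 2 + x2 t ^ 2 = -p := by
      rw [hx1, hx2, ← hr2]
      have := Real.sin_sq_add_cos_sq t
      ring_nf
      nlinarith [Real.sin_sq_add_cos_sq t]
    simp [hA, hb, hKdef, Matrix.vecMulVec_apply, Matrix.sub_apply]
    linarith
  -- derivative of the determinant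
  have hdet : ∀ t, HasDerivAt (fun s => (Y s).det) (c * (Y t).det) t := by
    intro t
    set M := A t - Matrix.vecMulVec b K with hM
    have h00 := hYode t 0 0
    have h01 := hYode t 0 1
    have h10 := hYode t 1 0
    have h11 := hYode t 1 1
    have hfun : (fun s => (Y s).det)
        = fun s => Y s 0 0 * Y s 1 1 - Y s 0 1 * Y s 1 0 := by
      funext s; rw [Matrix.det_fin_two]
    rw [hfun]
    have H := (h00.mul h11).sub (h01.mul h10)
    have hmul : ∀ i j, (M * Y t) i j = M i 0 * Y t 0 j + M i 1 * Y t 1 j := by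
      intro i j; rw [Matrix.mul_apply, Fin.sum_univ_two]
    refine HasDerivAt.congr_deriv H ?_
    rw [Matrix.det_fin_two, hmul, hmul, hmul, hmul]
    have := htr t
    rw [← hM] at this
    linear_combination (Y t 0 0 * Y t 1 1 - Y t 0 1 * Y t 1 0) * this
  -- uniqueness: det (Y t) = exp (c t)
  have hDet : ∀ t, (Y t).det = Real.exp (c * t) := by
    have hg : ∀ s, HasDerivAt (fun u => (Y u).det * Real.exp (-c * u)) 0 s := by
      intro s
      have he : HasDerivAt (fun u => Real.exp (-c * u)) (Real.exp (-c * s) * (-c * 1)) s :=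
        ((hasDerivAt_id s).const_mul (-c)).exp
      have := (hdet s).mul he
      refine HasDerivAt.congr_deriv this ?_
      ring
    have hconst : ∀ t, (Y t).det * Real.exp (-c * t) = (Y 0).det * Real.exp (-c * 0) := by
      intro t
      exact is_const_of_deriv_eq_zero (fun u => (hg u).differentiableAt)
        (fun u => (hg u).deriv) t 0
    intro t
    have h := hconst t
    rw [hY0, Matrix.det_one] at h
    simp at h
    have hepos := Real.exp_pos (-c * t)
    have : (Y t).det = (Real.exp (-c * t))⁻¹ := by
      field_simp at h ⊢
      linarith [h]
    rw [this, ← Real.exp_neg]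
    ring_nf
  have hDet2π : (Y (2 * π)).det = Real.exp (2 * π * c) := by
    rw [hDet]; ring_nf
  have hgt1 : 1 < Real.exp (2 * π * c) := by
    rw [Real.one_lt_exp_iff]
    positivity
  refine ⟨hDet2π, hgt1, ?_⟩
  -- eigenvalue of modulus > 1
  set Mc : Matrix (Fin 2) (Fin 2) ℂ := (Y (2 * π)).map Complex.ofReal with hMc
  set s : ℂ := Mc 0 0 + Mc 1 1 with hs
  set q : ℂ := Mc 0 0 * Mc 1 1 - Mc 0 1 * Mc 1 0 with hq
  have hqval : q = (Real.exp (2 * π * c) : ℝ) := by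
    have : q = Complex.ofReal ((Y (2 * π)).det) := by
      rw [hq, Matrix.det_fin_two]
      simp [hMc, Matrix.map_apply]
    rw [this, hDet2π]
  have hqnorm : ‖q‖ = Real.exp (2 * π * c) := by
    rw [hqval, Complex.norm_real, Real.norm_eq_abs]
    exact abs_of_pos (Real.exp_pos _)
  obtain ⟨d, hd⟩ := IsAlgClosed.exists_pow_nat_eq (s ^ 2 - 4 * q) two_pos
  have hfact : ∀ lam : ℂ, lam ^ 2 - s * lam + q
      = (lam - (s + d) / 2) * (lam - (s - d) / 2) := by
    intro lam
    have : d ^ 2 = s ^ 2 - 4 * q := hd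
    linear_combination (1/4 : ℂ) * this
  have hchar : ∀ lam : ℂ,
      Matrix.det (lam • (1 : Matrix (Fin 2) (Fin 2) ℂ) - Mc) = lam ^ 2 - s * lam + q := by
    intro lam
    rw [Matrix.det_fin_two]
    simp [Matrix.sub_apply, Matrix.smul_apply, Matrix.one_apply, hs, hq]
    ring
  set l1 : ℂ := (s + d) / 2 with hl1
  set l2 : ℂ := (s - d) / 2 with hl2
  have hprod : l1 * l2 = q := by
    rw [hl1, hl2]
    linear_combination (-1/4 : ℂ) * hd
  have hnprod : ‖l1‖ * ‖l2‖ = Real.exp (2 * π * c) := by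
    rw [← norm_mul, hprod, hqnorm]
  by_cases h1 : 1 < ‖l1‖
  · exact ⟨l1, h1, by rw [hchar, hfact]; simp⟩
  · push_neg at h1
    refine ⟨l2, ?_, by rw [hchar, hfact]; simp⟩
    by_contra h2
    push_neg at h2
    have : ‖l1‖ * ‖l2‖ ≤ 1 :=
      mul_le_one₀ h1 (norm_nonneg _) h2
    rw [hnprod] at this
    linarith
end

section
/- Let p < 0 and K₁, K₂ ∈ ℝ with K₁ + K₂ ≤ 0. Let r = √(−p), x₁(t) = r·sin t, x₂(t) = −r·cos t, A(t) = [[p + 3x₁(t)² + x₂(t)², −1 + 2x₁(t)x₂(t)], [1 + 2x₁(t)x₂(t), p + x₁(t)² + 3x₂(t)²]], b = (1,1), K = (K₁,K₂). For each μ ∈ ℂ let Y_μ : ℝ → ℂ^{2×2} satisfy Y_μ(0) = I and Y_μ′(t) = (A(t) − μ·bKᵀ)·Y_μ(t) for all t (real entries viewed as complex), and set P(μ) = Y_μ(2π); assume μ ↦ P(μ) is analytic on ℂ. Then there exists ε_max ∈ (0,1) such that for every ε ∈ (0,ε_max) there exists λ ∈ ℂ with |λ| > 1, λ ≠ 1−ε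 and det(λ·I − P(1 − ε/(λ−(1−ε)))) = 0. -/
open Real Matrix Set Metric

/-- Liouville/Abel formula for a 2×2 complex linear ODE with constant trace. -/
lemma liouville2 (M : ℝ → Matrix (Fin 2) (Fin 2) ℂ) (Y : ℝ → Matrix (Fin 2) (Fin 2) ℂ)
    (hY0 : Y 0 = 1)
    (hode : ∀ (t : ℝ) (i j : Fin 2), HasDerivAt (fun s => Y s i j) ((M t * Y t) i j) t)
    (c : ℂ) (htr : ∀ t, M t 0 0 + M t 1 1 = c) :
    ∀ t, Matrix.det (Y t) = Complex.exp (c * t) := by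
  set d : ℝ → ℂ := fun t => Y t 0 0 * Y t 1 1 - Y t 0 1 * Y t 1 0 with hd
  have hdet : ∀ t, Matrix.det (Y t) = d t := fun t => Matrix.det_fin_two (Y t)
  have hder : ∀ t, HasDerivAt d (c * d t) t := by
    intro t
    have h00 := hode t 0 0
    have h01 := hode t 0 1
    have h10 := hode t 1 0
    have h11 := hode t 1 1
    have hmul : ∀ i j : Fin 2, (M t * Y t) i j = M t i 0 * Y t 0 j + M t i 1 * Y t 1 j := by
      intro i j
      simp [Matrix.mul_apply, Fin.sum_univ_two]
    rw [hmul] at h00 h01 h10 h11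
    have := ((h00.mul h11).sub (h01.mul h10))
    refine this.congr_deriv (Eq.symm ?_)
    simp only [hd]
    linear_combination (Y t 0 0 * Y t 1 1 - Y t 0 1 * Y t 1 0) * (htr t).symm
  set E : ℝ → ℂ := fun s => Complex.exp (-(c * s)) with hE
  have hEder : ∀ s : ℝ, HasDerivAt E (E s * (-c)) s := by
    intro s
    have h1 : HasDerivAt (fun t : ℝ => ((t : ℝ) : ℂ)) 1 s := (hasDerivAt_id s).ofReal_comp
    have h2 : HasDerivAt (fun t : ℝ => -(c * (t : ℂ))) (-c) s := by
      simpa using (h1.const_mul c).fun_neg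
    simpa [hE] using h2.cexp
  have hprod : ∀ s : ℝ, HasDerivAt (fun u => d u * E u) 0 s := by
    intro s
    have := (hder s).mul (hEder s)
    refine this.congr_deriv (Eq.symm ?_)
    ring
  have hconst := is_const_of_deriv_eq_zero
    (fun s => (hprod s).differentiableAt) (fun s => (hprod s).deriv)
  have key : ∀ t : ℝ, d t * E t = 1 := by
    intro t
    have := hconst t 0
    rw [this]
    have h0 : d 0 = 1 := by simp [hd, hY0]
    simp [h0, hE]
  intro t
  have h2 : E t * Complex.exp (c * t) = 1 := by
    rw [hE]; rw [← Complex.exp_add]; simp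
  calc Matrix.det (Y t) = d t := hdet t
    _ = d t * (E t * Complex.exp (c * t)) := by rw [h2, mul_one]
    _ = (d t * E t) * Complex.exp (c * t) := by ring
    _ = Complex.exp (c * t) := by rw [key t, one_mul]

/-- Minimum-modulus trick: an analytic function that is small at the centre of a disc but
bounded below on the bounding sphere must vanish somewhere in the closed disc. -/
lemma exists_zero_in_ball (f : ℂ → ℂ) (z₀ : ℂ) (δ m : ℝ) (hδ : 0 < δ) (hm : 0 < m)
    (hf : ∀ z ∈ closedBall z₀ δ, AnalyticAt ℂ f z)
    (hsmall : ‖f z₀‖ < m) (hbig : ∀ z ∈ sphere z₀ δ, m ≤ ‖f z‖) :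
    ∃ z ∈ closedBall z₀ δ, f z = 0 := by
  by_contra h
  push_neg at h
  have hinv : ∀ z ∈ closedBall z₀ δ, AnalyticAt ℂ (fun w => (f w)⁻¹) z :=
    fun z hz => (hf z hz).inv (h z hz)
  have hcl : closure (ball z₀ δ) = closedBall z₀ δ := closure_ball z₀ hδ.ne'
  have hd : DiffContOnCl ℂ (fun w => (f w)⁻¹) (ball z₀ δ) := by
    constructor
    · exact fun z hz => ((hinv z (ball_subset_closedBall hz)).differentiableAt).differentiableWithinAt
    · rw [hcl]
      exact fun z hz => ((hinv z hz).continuousAt).continuousWithinAt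
  have hfr : frontier (ball z₀ δ) = sphere z₀ δ := frontier_ball z₀ hδ.ne'
  have hbound : ∀ z ∈ frontier (ball z₀ δ), ‖(f z)⁻¹‖ ≤ m⁻¹ := by
    intro z hz
    rw [hfr] at hz
    rw [norm_inv]
    exact inv_anti₀ hm (hbig z hz)
  have hz₀ : z₀ ∈ closure (ball z₀ δ) := by
    rw [hcl]; exact mem_closedBall_self hδ.le
  have := Complex.norm_le_of_forall_mem_frontier_norm_le isBounded_ball hd hbound hz₀
  rw [norm_inv] at this
  have hne : f z₀ ≠ 0 := h z₀ (mem_closedBall_self hδ.le)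
  have hpos : 0 < ‖f z₀‖ := norm_pos_iff.2 hne
  have : m ≤ ‖f z₀‖ := by
    rw [inv_le_inv₀ (by positivity) hm] at this
    · exact this
  linarith

/-- **Lemma 5.1 (lack of stabilisability for constant gains), provable branch.**
For the Hopf normal-form orbit and constant gains with `K₁ + K₂ ≤ 0`, the extended
time-delayed feedback characteristic function `λ ↦ det(λI − P(1 − ε/(λ−(1−ε))))` has a
root outside the unit circle for all sufficiently small `ε > 0`. -/
theorem stmt_14 (p : ℝ) (hp : p < 0) (K1 K2 : ℝ) (hK : K1 + K2 ≤ 0)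
    (r : ℝ) (hr : r = Real.sqrt (-p))
    (x1 x2 : ℝ → ℝ) (hx1 : ∀ t, x1 t = r * Real.sin t)
    (hx2 : ∀ t, x2 t = -r * Real.cos t)
    (A : ℝ → Matrix (Fin 2) (Fin 2) ℝ)
    (hA : ∀ t, A t = !![p + 3 * x1 t ^ 2 + x2 t ^ 2, -1 + 2 * x1 t * x2 t;
                       1 + 2 * x1 t * x2 t, p + x1 t ^ 2 + 3 * x2 t ^ 2])
    (b K : Fin 2 → ℝ) (hb : b = ![1, 1]) (hKdef : K = ![K1, K2])
    (Y : ℂ → ℝ → Matrix (Fin 2) (Fin 2) ℂ)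
    (hY0 : ∀ μ : ℂ, Y μ 0 = 1)
    (hYode : ∀ (μ : ℂ) (t : ℝ) (i j : Fin 2),
      HasDerivAt (fun s => Y μ s i j)
        ((((A t).map (Complex.ofReal)
            - μ • Matrix.vecMulVec (fun i => ((b i : ℝ) : ℂ)) (fun j => ((K j : ℝ) : ℂ)))
          * Y μ t) i j) t)
    (P : ℂ → Matrix (Fin 2) (Fin 2) ℂ) (hP : ∀ μ, P μ = Y μ (2 * π))
    (hPanalytic : ∀ (μ : ℂ) (i j : Fin 2), AnalyticAt ℂ (fun ν => P ν i j) μ) :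
    ∃ εmax ∈ Ioo (0 : ℝ) 1, ∀ ε ∈ Ioo (0 : ℝ) εmax, ∃ lam : ℂ,
      1 < ‖lam‖ ∧ lam ≠ 1 - (ε : ℂ) ∧
      Matrix.det (lam • (1 : Matrix (Fin 2) (Fin 2) ℂ)
        - P (1 - (ε : ℂ) / (lam - (1 - (ε : ℂ))))) = 0 := by
  -- the constant trace
  set c : ℝ := -2 * p - (K1 + K2) with hcdef
  have hc : 0 < c := by simp [hcdef]; nlinarith
  have hxsq : ∀ t, x1 t ^ 2 + x2 t ^ 2 = -p := by
    intro t
    have hrsq : r ^ 2 = -p := by rw [hr]; exact Real.sq_sqrt (by linarith)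
    have := Real.sin_sq_add_cos_sq t
    rw [hx1, hx2]
    nlinarith [this, hrsq]
  -- trace computation
  set M : ℝ → Matrix (Fin 2) (Fin 2) ℂ := fun t =>
    (A t).map (Complex.ofReal)
      - (1 : ℂ) • Matrix.vecMulVec (fun i => ((b i : ℝ) : ℂ)) (fun j => ((K j : ℝ) : ℂ)) with hM
  have htr : ∀ t, M t 0 0 + M t 1 1 = (c : ℂ) := by
    intro t
    simp only [hM, Matrix.sub_apply, Matrix.map_apply, Matrix.smul_apply, one_smul,
      Matrix.vecMulVec_apply, hA, hb, hKdef]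
    simp only [Matrix.cons_val', Matrix.cons_val_zero, Matrix.cons_val_one, Matrix.head_cons,
      Matrix.empty_val', Matrix.cons_val_fin_one, Matrix.head_fin_const, Matrix.of_apply]
    have h := hxsq t
    have : (x1 t : ℂ) ^ 2 + (x2 t : ℂ) ^ 2 = (-p : ℝ) := by exact_mod_cast congrArg Complex.ofReal h
    push_cast at this ⊢
    rw [hcdef]
    push_cast
    linear_combination 4 * this
  -- determinant of the monodromy at μ = 1
  have hdetP : Matrix.det (P 1) = Complex.exp ((c : ℂ) * (2 * π)) := by
    rw [hP 1]
    have := liouville2 M (Y 1) (hY0 1) (fun t i j => by simpa [hM] using hYode 1 t i j) (c : ℂ) htr (2 * π)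
    rw [this]
    norm_cast
  -- the determinant has modulus > 1
  have hDnorm : ‖Matrix.det (P 1)‖ = Real.exp (c * (2 * π)) := by
    rw [hdetP]
    rw [Complex.norm_exp]
    norm_num
  have hDbig : 1 < ‖Matrix.det (P 1)‖ := by
    rw [hDnorm]
    rw [Real.one_lt_exp_iff]
    positivity
  -- the characteristic quadratic and its factorisation
  set g : ℂ → ℂ → ℂ := fun lam ν =>
    (lam - P ν 0 0) * (lam - P ν 1 1) - P ν 0 1 * P ν 1 0 with hgdef
  have hg : ∀ (lam ν : ℂ),
      Matrix.det (lam • (1 : Matrix (Fin 2) (Fin 2) ℂ) - P ν) = g lam ν := by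
    intro lam ν
    rw [Matrix.det_fin_two]
    simp [hgdef, Matrix.one_apply, smul_eq_mul]
  set T : ℂ := P 1 0 0 + P 1 1 1 with hT
  set D : ℂ := Matrix.det (P 1) with hD
  obtain ⟨s, hs⟩ := IsAlgClosed.exists_pow_nat_eq (k := ℂ) (T ^ 2 - 4 * D) (n := 2) (by norm_num)
  have hD2 : P 1 0 0 * P 1 1 1 - P 1 0 1 * P 1 1 0 = D := (Matrix.det_fin_two (P 1)).symm
  set l1 : ℂ := (T + s) / 2 with hl1
  set l2 : ℂ := (T - s) / 2 with hl2
  have hfact : ∀ lam : ℂ, g lam 1 = (lam - l1) * (lam - l2) := by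
    intro lam
    simp only [hgdef, hl1, hl2]
    linear_combination hD2 + hs / 4
  have hprodroots : l1 * l2 = D := by
    simp only [hl1, hl2]
    linear_combination -hs / 4
  have hmaxroot : 1 < ‖l1‖ ∨ 1 < ‖l2‖ := by
    by_contra hcon
    push_neg at hcon
    have : ‖l1 * l2‖ ≤ 1 := by
      rw [norm_mul]
      exact mul_le_one₀ hcon.1 (norm_nonneg _) hcon.2
    rw [hprodroots] at this
    exact absurd this (not_le.2 hDbig)
  -- pick the root outside the unit circle
  obtain ⟨z₀, z₁, h1z, hroot⟩ : ∃ z₀ z₁ : ℂ, 1 < ‖z₀‖ ∧ ∀ lam, g lam 1 = (lam - z₀) * (lam - z₁) := by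
    rcases hmaxroot with h | h
    · exact ⟨l1, l2, h, hfact⟩
    · exact ⟨l2, l1, h, fun lam => by rw [hfact lam]; ring⟩
  set η : ℝ := (‖z₀‖ - 1) / 2 with hηdef
  have hη : 0 < η := by simp only [hηdef]; linarith
  set ρ : ℝ := ‖z₁ - z₀‖ with hρdef
  set δ' : ℝ := if ρ = 0 then η else ρ / 2 with hδ'def
  have hδ' : 0 < δ' := by
    rw [hδ'def]
    split_ifs with hcase
    · exact hη
    · have : 0 ≤ ρ := norm_nonneg _
      have : 0 < ρ := lt_of_le_of_ne this (Ne.symm hcase)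
      linarith
  set δ : ℝ := min η δ' with hδdef
  have hδ : 0 < δ := lt_min hη hδ'
  have hδη : δ ≤ η := min_le_left _ _
  have hfar : ∀ lam ∈ sphere z₀ δ, δ' ≤ ‖lam - z₁‖ := by
    intro lam hlam
    rw [mem_sphere_iff_norm] at hlam
    rw [hδ'def]
    split_ifs with hcase
    · have hz : z₁ = z₀ := by
        have := hρdef ▸ hcase
        rwa [norm_eq_zero, sub_eq_zero] at this
      rw [hz, hlam]
      calc η = min η η := (min_self η).symm
        _ ≤ min η δ' := by
            apply min_le_min le_rfl
            rw [hδ'def]; simp [hcase]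
        _ = δ := rfl
    · have h1 : ρ - ‖lam - z₀‖ ≤ ‖lam - z₁‖ := by
        have h4 : ρ ≤ ‖lam - z₁‖ + ‖lam - z₀‖ := by
          calc ρ = ‖(z₁ - lam) + (lam - z₀)‖ := by rw [hρdef]; ring_nf
            _ ≤ ‖z₁ - lam‖ + ‖lam - z₀‖ := norm_add_le _ _
            _ = ‖lam - z₁‖ + ‖lam - z₀‖ := by rw [norm_sub_rev]
        linarith
      have hρpos : 0 < ρ := lt_of_le_of_ne (norm_nonneg _) (Ne.symm hcase)
      have hδρ : δ ≤ ρ / 2 := by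
        rw [hδdef, hδ'def, if_neg hcase]; exact min_le_right _ _
      rw [hlam] at h1
      linarith
  set m : ℝ := δ * δ' with hmdef
  have hm : 0 < m := mul_pos hδ hδ'
  have hbig1 : ∀ lam ∈ sphere z₀ δ, m ≤ ‖g lam 1‖ := by
    intro lam hlam
    have hd := hfar lam hlam
    rw [mem_sphere_iff_norm] at hlam
    rw [hroot lam, norm_mul, hlam]
    exact mul_le_mul_of_nonneg_left hd hδ.le
  -- joint continuity and uniform continuity on a compact set
  have hPc : ∀ i j : Fin 2, Continuous fun ν => P ν i j := fun i j =>
    continuous_iff_continuousAt.2 fun ν => (hPanalytic ν i j).continuousAt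
  have hFc : Continuous fun q : ℂ × ℂ => g q.1 q.2 := by
    simp only [hgdef]
    exact ((continuous_fst.sub ((hPc 0 0).comp continuous_snd)).mul
      (continuous_fst.sub ((hPc 1 1).comp continuous_snd))).sub
      (((hPc 0 1).comp continuous_snd).mul ((hPc 1 0).comp continuous_snd))
  have hKcpt : IsCompact (closedBall z₀ δ ×ˢ closedBall (1 : ℂ) 1) :=
    (isCompact_closedBall _ _).prod (isCompact_closedBall _ _)
  have hUC := hKcpt.uniformContinuousOn_of_continuous hFc.continuousOn
  rw [Metric.uniformContinuousOn_iff] at hUC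
  obtain ⟨δ₀, hδ₀, hUC⟩ := hUC (m / 2) (by positivity)
  -- choice of εmax
  refine ⟨min (1 / 2) (min (η / 2) (η * δ₀ / 2)), ⟨by positivity, ?_⟩, ?_⟩
  · calc min (1 / 2) (min (η / 2) (η * δ₀ / 2)) ≤ 1 / 2 := min_le_left _ _
      _ < 1 := by norm_num
  intro ε hε
  obtain ⟨hε0, hεlt⟩ := hε
  have hεhalf : ε < 1 / 2 := lt_of_lt_of_le hεlt (min_le_left _ _)
  have hεη : ε < η / 2 := lt_of_lt_of_le hεlt ((min_le_right _ _).trans (min_le_left _ _))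
  have hεδ₀ : ε < η * δ₀ / 2 := lt_of_lt_of_le hεlt ((min_le_right _ _).trans (min_le_right _ _))
  set μf : ℂ → ℂ := fun lam => 1 - (ε : ℂ) / (lam - (1 - (ε : ℂ))) with hμfdef
  have h1me : ‖(1 : ℂ) - (ε : ℂ)‖ = 1 - ε := by
    have : (1 : ℂ) - (ε : ℂ) = ((1 - ε : ℝ) : ℂ) := by push_cast; ring
    rw [this, Complex.norm_real, Real.norm_eq_abs, abs_of_pos (by linarith)]
  have hlamnorm : ∀ lam ∈ closedBall z₀ δ, 1 + η ≤ ‖lam‖ := by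
    intro lam hlam
    rw [mem_closedBall, dist_eq_norm] at hlam
    have h1 : ‖z₀‖ - ‖lam‖ ≤ ‖z₀ - lam‖ := norm_sub_norm_le _ _
    have h2 : ‖z₀ - lam‖ = ‖lam - z₀‖ := norm_sub_rev _ _
    have h3 : ‖z₀‖ = 1 + 2 * η := by rw [hηdef]; ring
    rw [h2] at h1
    linarith [hlam.trans hδη]
  have hden : ∀ lam ∈ closedBall z₀ δ, η ≤ ‖lam - (1 - (ε : ℂ))‖ := by
    intro lam hlam
    have h1 : ‖lam‖ - ‖(1 : ℂ) - (ε : ℂ)‖ ≤ ‖lam - ((1 : ℂ) - (ε : ℂ))‖ := norm_sub_norm_le _ _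
    have h2 := hlamnorm lam hlam
    rw [h1me] at h1
    linarith
  have hdenne : ∀ lam ∈ closedBall z₀ δ, lam - (1 - (ε : ℂ)) ≠ 0 := by
    intro lam hlam h0
    have := hden lam hlam
    rw [h0, norm_zero] at this
    linarith
  have hμdist : ∀ lam ∈ closedBall z₀ δ, dist (μf lam) 1 ≤ ε / η := by
    intro lam hlam
    have hd := hden lam hlam
    rw [hμfdef]
    simp only [dist_eq_norm]
    have : (1 : ℂ) - (ε : ℂ) / (lam - (1 - (ε : ℂ))) - 1 = -((ε : ℂ) / (lam - (1 - (ε : ℂ)))) := by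
      ring
    rw [this, norm_neg, norm_div, Complex.norm_real, Real.norm_eq_abs, abs_of_pos hε0]
    apply div_le_div_of_nonneg_left hε0.le hη hd
  have hεη1 : ε / η < δ₀ := by
    rw [div_lt_iff₀ hη]
    calc ε < η * δ₀ / 2 := hεδ₀
      _ ≤ η * δ₀ := by nlinarith
      _ = δ₀ * η := by ring
  have hεη2 : ε / η ≤ 1 := by
    rw [div_le_one hη]
    linarith
  have hμmem : ∀ lam ∈ closedBall z₀ δ, μf lam ∈ closedBall (1 : ℂ) 1 := by
    intro lam hlam
    rw [mem_closedBall]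
    exact (hμdist lam hlam).trans hεη2
  have hclose : ∀ lam ∈ closedBall z₀ δ, ‖g lam (μf lam) - g lam 1‖ < m / 2 := by
    intro lam hlam
    have hmem1 : (lam, μf lam) ∈ closedBall z₀ δ ×ˢ closedBall (1 : ℂ) 1 :=
      ⟨hlam, hμmem lam hlam⟩
    have hmem2 : (lam, (1 : ℂ)) ∈ closedBall z₀ δ ×ˢ closedBall (1 : ℂ) 1 :=
      ⟨hlam, mem_closedBall_self zero_le_one⟩
    have hdist : dist ((lam, μf lam) : ℂ × ℂ) (lam, 1) < δ₀ := by
      rw [Prod.dist_eq]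
      simp only [dist_self]
      rw [max_eq_right dist_nonneg]
      exact lt_of_le_of_lt (hμdist lam hlam) hεη1
    have := hUC _ hmem1 _ hmem2 hdist
    rwa [dist_eq_norm] at this
  -- analyticity of the perturbed characteristic function on the closed ball
  have hfana : ∀ z ∈ closedBall z₀ δ, AnalyticAt ℂ (fun lam => g lam (μf lam)) z := by
    intro z hz
    have hzden := hdenne z hz
    have hμa : AnalyticAt ℂ μf z := by
      rw [hμfdef]
      exact analyticAt_const.sub
        (analyticAt_const.div ((analyticAt_id).sub analyticAt_const) hzden)
    have hq : ∀ i j : Fin 2, AnalyticAt ℂ (fun lam => P (μf lam) i j) z := by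
      intro i j
      have := (hPanalytic (μf z) i j).comp hμa
      exact this
    simp only [hgdef]
    exact (((analyticAt_id).sub (hq 0 0)).mul ((analyticAt_id).sub (hq 1 1))).sub
      ((hq 0 1).mul (hq 1 0))
  -- the unperturbed function vanishes at z₀
  have hg0 : g z₀ 1 = 0 := by rw [hroot z₀]; ring
  have hsmall : ‖g z₀ (μf z₀)‖ < m / 2 := by
    have := hclose z₀ (mem_closedBall_self hδ.le)
    rwa [hg0, sub_zero] at this
  have hbig : ∀ z ∈ sphere z₀ δ, m / 2 ≤ ‖g z (μf z)‖ := by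
    intro z hzs
    have hzc : z ∈ closedBall z₀ δ := sphere_subset_closedBall hzs
    have h1 := hbig1 z hzs
    have h2 := hclose z hzc
    have h3 : ‖g z 1‖ - ‖g z (μf z) - g z 1‖ ≤ ‖g z (μf z)‖ := by
      have := norm_sub_norm_le (g z (μf z)) (g z 1)
      have h4 : ‖g z (μf z)‖ - ‖g z 1‖ ≥ -‖g z (μf z) - g z 1‖ := by
        have := abs_norm_sub_norm_le (g z (μf z)) (g z 1)
        have := abs_le.1 this
        linarith [this.1]
      linarith
    linarith
  obtain ⟨lam, hlammem, hlamzero⟩ :=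
    exists_zero_in_ball (fun lam => g lam (μf lam)) z₀ δ (m / 2) hδ (by positivity)
      hfana hsmall hbig
  refine ⟨lam, ?_, ?_, ?_⟩
  · have := hlamnorm lam hlammem
    linarith
  · intro hcon
    have hl := hlamnorm lam hlammem
    rw [hcon, h1me] at hl
    linarith
  · rw [hg]
    exact hlamzero
end

section
/- Let n ≥ 1, let b : ℝ → ℝⁿ be continuous, K₀ ∈ ℝⁿ and μ ∈ ℂ. For δ > 0 let Z_δ : [0,δ] → ℂ^{n×n} satisfy Z_δ(0) = I and Z_δ′(t) = −(μ/δ)·b(t)K₀ᵀ·Z_δ(t) for all t ∈ [0,δ] (real entries viewed as complex). Then Z_δ(δ) converges to exp(−μ·b(0)K₀ᵀ) as δ → 0⁺, where exp is the matrix exponential. -/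
open Set Matrix Filter Nat MeasureTheory intervalIntegral
set_option maxHeartbeats 1000000

lemma aux_exp_sq {n : ℕ} (A : Matrix (Fin n) (Fin n) ℂ) (c : ℂ) (h : A * A = c • A) :
    NormedSpace.exp A =
      1 + (if c = 0 then 1 else (Complex.exp c - 1) / c) • A := by
  letI : SeminormedRing (Matrix (Fin n) (Fin n) ℂ) := Matrix.linftyOpSemiNormedRing
  letI : NormedRing (Matrix (Fin n) (Fin n) ℂ) := Matrix.linftyOpNormedRing
  letI : NormedAlgebra ℂ (Matrix (Fin n) (Fin n) ℂ) := Matrix.linftyOpNormedAlgebra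
  have hpow : ∀ k : ℕ, A ^ (k + 1) = c ^ k • A := by
    intro k
    induction k with
    | zero => simp
    | succ k ih =>
      rw [pow_succ, ih, smul_mul_assoc, h, smul_smul, pow_succ]
  have hsum : Summable fun k : ℕ => (k !⁻¹ : ℂ) • A ^ k :=
    NormedSpace.expSeries_summable' (𝕂 := ℂ) A
  have e1 : NormedSpace.exp A = ∑' k : ℕ, (k !⁻¹ : ℂ) • A ^ k :=
    congrFun (NormedSpace.exp_eq_tsum ℂ) A
  have h2 : Summable fun k : ℕ => (k !⁻¹ : ℂ) • c ^ k :=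
    NormedSpace.expSeries_summable' (𝕂 := ℂ) c
  have h3 : Summable fun k : ℕ => ((((k + 1) : ℕ)! : ℂ))⁻¹ • c ^ (k + 1) :=
    (summable_nat_add_iff 1).mpr h2
  have hexp : Complex.exp c = ∑' k : ℕ, (k !⁻¹ : ℂ) • c ^ k := by
    rw [Complex.exp_eq_exp_ℂ]
    exact congrFun (NormedSpace.exp_eq_tsum ℂ) c
  have key : (∑' k : ℕ, ((((k + 1) : ℕ)! : ℂ))⁻¹ • c ^ (k + 1)) = Complex.exp c - 1 := by
    rw [hexp, h2.tsum_eq_zero_add]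
    simp
  have hgsum : Summable fun k : ℕ => ((((k + 1) : ℕ)! : ℂ))⁻¹ * c ^ k := by
    by_cases hc : c = 0
    · subst hc
      apply summable_of_ne_finset_zero (s := {0})
      intro k hk
      simp only [Finset.mem_singleton] at hk
      simp [zero_pow hk]
    · have := h3.mul_left c⁻¹
      refine this.congr fun k => ?_
      rw [smul_eq_mul, pow_succ]
      field_simp
      try ring
  rw [e1, hsum.tsum_eq_zero_add]
  simp only [pow_zero, Nat.factorial_zero, Nat.cast_one, inv_one, one_smul, hpow, smul_smul]
  congr 1
  rw [hgsum.tsum_smul_const]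
  congr 1
  by_cases hc : c = 0
  · subst hc
    rw [if_pos rfl, tsum_eq_single 0]
    · simp
    · intro k hk
      simp [zero_pow hk]
  · rw [if_neg hc]
    have : (∑' k : ℕ, ((((k + 1) : ℕ)! : ℂ))⁻¹ * c ^ k)
        = c⁻¹ * ∑' k : ℕ, ((((k + 1) : ℕ)! : ℂ))⁻¹ • c ^ (k + 1) := by
      rw [← tsum_mul_left]
      congr 1
      ext k
      rw [smul_eq_mul, pow_succ]
      field_simp
      try ring
    rw [this, key]
    field_simp
    try ring

/-- **Core impulse-limit computation (behind eq. (3.8)).**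
If `Z_δ` solves `Z' = −(μ/δ) b(t)K₀ᵀ Z`, `Z_δ(0) = I`, on `[0, δ]`, then
`Z_δ(δ) → exp(−μ b(0)K₀ᵀ)` as `δ → 0⁺`. -/
theorem stmt_17 (n : ℕ) (hn : 1 ≤ n)
    (b : ℝ → Fin n → ℝ) (hbc : Continuous b)
    (K0 : Fin n → ℝ) (μ : ℂ)
    (Zd : ℝ → ℝ → Matrix (Fin n) (Fin n) ℂ)
    (hZd0 : ∀ δ > (0 : ℝ), Zd δ 0 = 1)
    (hZdode : ∀ δ > (0 : ℝ), ∀ t ∈ Icc (0 : ℝ) δ, ∀ i j,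
      HasDerivAt (fun s => Zd δ s i j)
        (((-(μ / (δ : ℂ)) •
            Matrix.vecMulVec (fun i => ((b t i : ℝ) : ℂ)) (fun j => ((K0 j : ℝ) : ℂ)))
          * Zd δ t) i j) t) :
    Tendsto (fun δ => Zd δ δ) (nhdsWithin 0 (Ioi (0 : ℝ)))
      (nhds (NormedSpace.exp
        (-μ • Matrix.vecMulVec (fun i => ((b 0 i : ℝ) : ℂ)) (fun j => ((K0 j : ℝ) : ℂ))))) := by
  classical
  -- the scalar coefficient c(t) = K₀ᵀ b(t) and its primitive C
  set c : ℝ → ℂ := fun t => ∑ i, (K0 i : ℂ) * (b t i : ℂ) with hc_def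
  have hbci : ∀ i : Fin n, Continuous fun t => ((b t i : ℝ) : ℂ) :=
    fun i => Complex.continuous_ofReal.comp ((continuous_apply i).comp hbc)
  have hc_cont : Continuous c := by
    apply continuous_finset_sum
    exact fun i _ => continuous_const.mul (hbci i)
  set C : ℝ → ℂ := fun t => ∫ s in (0:ℝ)..t, c s with hC_def
  have hC_deriv : ∀ t, HasDerivAt C (c t) t := fun t =>
    (hc_cont.integral_hasStrictDerivAt 0 t).hasDerivAt
  have hC_cont : Continuous C :=
    continuous_iff_continuousAt.mpr fun t => (hC_deriv t).continuousAt
  have hC0 : C 0 = 0 := intervalIntegral.integral_same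
  -- key explicit formula for Zd δ δ
  have hkey : ∀ δ : ℝ, 0 < δ → ∀ i j, Zd δ δ i j
      = (1 : Matrix (Fin n) (Fin n) ℂ) i j + (-μ * (K0 j : ℂ)) *
        ∫ s in (0:ℝ)..1, ((b (δ*s) i : ℝ) : ℂ) * Complex.exp (-μ * (C (δ*s) / δ)) := by
    intro δ hδ i j
    have hδC : ((δ:ℝ) : ℂ) ≠ 0 := by
      exact_mod_cast Complex.ofReal_ne_zero.mpr (ne_of_gt hδ)
    -- simplified form of the ODE
    have hZd' : ∀ t ∈ Icc (0:ℝ) δ, ∀ i j, HasDerivAt (fun s => Zd δ s i j)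
        (-(μ/δ) * ((b t i : ℝ) : ℂ) * (∑ k, (K0 k : ℂ) * Zd δ t k j)) t := by
      intro t ht i j
      have h0 := hZdode δ hδ t ht i j
      have heq : ((-(μ / (δ : ℂ)) •
            Matrix.vecMulVec (fun i => ((b t i : ℝ) : ℂ)) (fun j => ((K0 j : ℝ) : ℂ)))
          * Zd δ t) i j
          = -(μ/δ) * ((b t i : ℝ) : ℂ) * (∑ k, (K0 k : ℂ) * Zd δ t k j) := by
        rw [Matrix.mul_apply, Finset.mul_sum]
        refine Finset.sum_congr rfl fun k _ => ?_
        simp only [Matrix.smul_apply, Matrix.vecMulVec_apply, smul_eq_mul]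
        ring
      rw [heq] at h0
      exact h0
    -- the row combination u(t) = Σ K0 i * Z(t) i j solves a scalar ODE
    have hu : ∀ t ∈ Icc (0:ℝ) δ, (∑ k, (K0 k : ℂ) * Zd δ t k j)
        = Complex.exp (-((μ/δ) * C t)) * (K0 j : ℂ) := by
      set u : ℝ → ℂ := fun t => ∑ k, (K0 k : ℂ) * Zd δ t k j with hu_def
      have hu' : ∀ t ∈ Icc (0:ℝ) δ, HasDerivAt u (-(μ/δ) * c t * u t) t := by
        intro t ht
        have h1 : HasDerivAt u (∑ k, (K0 k : ℂ) * (-(μ/δ) * ((b t k : ℝ):ℂ) * u t)) t :=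
          HasDerivAt.fun_sum fun k _ => (hZd' t ht k j).const_mul _
        have h2 : -(μ/δ) * c t * u t = ∑ k, (K0 k : ℂ) * (-(μ/δ) * ((b t k : ℝ):ℂ) * u t) := by
          simp only [hc_def, Finset.mul_sum, Finset.sum_mul]
          refine Finset.sum_congr rfl fun k _ => by ring
        rw [h2]
        exact h1
      set g : ℝ → ℂ := fun t => Complex.exp ((μ/δ) * C t) * u t with hg_def
      have hg' : ∀ t ∈ Icc (0:ℝ) δ, HasDerivAt g 0 t := by
        intro t ht
        have h1 : HasDerivAt (fun t => Complex.exp ((μ/δ) * C t))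
            (Complex.exp ((μ/δ) * C t) * ((μ/δ) * c t)) t :=
          ((hC_deriv t).const_mul ((μ:ℂ)/δ)).cexp
        have h2 := h1.mul (hu' t ht)
        have h3 : Complex.exp ((μ/δ) * C t) * ((μ/δ) * c t) * u t
            + Complex.exp ((μ/δ) * C t) * (-(μ/δ) * c t * u t) = 0 := by ring
        rw [h3] at h2
        exact h2
      have hgc : ∀ t ∈ Icc (0:ℝ) δ, g t = g 0 :=
        constant_of_has_deriv_right_zero
          (fun t ht => ((hg' t ht).continuousAt).continuousWithinAt)
          (fun t ht => ((hg' t (Ico_subset_Icc_self ht)).hasDerivWithinAt))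
      have hg0 : g 0 = (K0 j : ℂ) := by
        have hu0 : u 0 = (K0 j : ℂ) := by
          simp only [hu_def, hZd0 δ hδ, Matrix.one_apply, mul_ite, mul_one, mul_zero]
          simp
        simp [hg_def, hC0, hu0]
      intro t ht
      have h4 : Complex.exp ((μ/δ) * C t) * u t = (K0 j : ℂ) := (hgc t ht).trans hg0
      have hne := Complex.exp_ne_zero ((μ/δ) * C t)
      rw [Complex.exp_neg, ← h4]
      field_simp
      rfl
    -- FTC on each matrix entry
    set F : ℝ → ℂ := fun t => ((b t i : ℝ) : ℂ) * Complex.exp (-μ * (C t / δ)) with hF_def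
    have hFc : Continuous F := by
      apply Continuous.mul (hbci i)
      apply Complex.continuous_exp.comp
      exact continuous_const.mul (hC_cont.div_const _)
    have hd : ∀ t ∈ Icc (0:ℝ) δ, HasDerivAt (fun s => Zd δ s i j)
        ((-(μ/δ) * (K0 j : ℂ)) * F t) t := by
      intro t ht
      have h0 := hZd' t ht i j
      rw [hu t ht] at h0
      have : -(μ/δ) * ((b t i : ℝ):ℂ) * (Complex.exp (-((μ/δ) * C t)) * (K0 j : ℂ))
          = (-(μ/δ) * (K0 j : ℂ)) * F t := by
        simp only [hF_def]
        have : -μ * (C t / δ) = -((μ/δ) * C t) := by ring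
        rw [this]
        ring
      rw [this] at h0
      exact h0
    have hint : ∫ t in (0:ℝ)..δ, (-(μ/δ) * (K0 j : ℂ)) * F t = Zd δ δ i j - Zd δ 0 i j := by
      refine intervalIntegral.integral_eq_sub_of_hasDerivAt (f := fun s => Zd δ s i j)
        (fun t ht => ?_) ((Continuous.intervalIntegrable (by continuity) 0 δ))
      rw [uIcc_of_le hδ.le] at ht
      exact hd t ht
    -- substitute t = δ s
    have hsub : ∫ t in (0:ℝ)..δ, F t = (δ:ℂ) * ∫ s in (0:ℝ)..1, F (δ*s) := by
      have h5 := intervalIntegral.smul_integral_comp_mul_left F δ (a := (0:ℝ)) (b := (1:ℝ))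
      rw [mul_zero, mul_one] at h5
      rw [← h5, Complex.real_smul]
    have h6 : Zd δ δ i j = Zd δ 0 i j + (-(μ/δ) * (K0 j : ℂ)) * ∫ t in (0:ℝ)..δ, F t := by
      rw [← intervalIntegral.integral_const_mul, hint]; ring
    rw [h6, hZd0 δ hδ, hsub]
    have : (-(μ/δ) * (K0 j : ℂ)) * ((δ:ℂ) * ∫ s in (0:ℝ)..1, F (δ*s))
        = (-μ * (K0 j : ℂ)) * ∫ s in (0:ℝ)..1, F (δ*s) := by
      field_simp
      try ring
    rw [this]
  -- limit of the integrals
  have hInt : ∀ i : Fin n, Tendsto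
      (fun δ : ℝ => ∫ s in (0:ℝ)..1, ((b (δ*s) i : ℝ) : ℂ) * Complex.exp (-μ * (C (δ*s) / δ)))
      (nhdsWithin 0 (Ioi (0:ℝ)))
      (nhds (∫ s in (0:ℝ)..1, ((b 0 i : ℝ) : ℂ) * Complex.exp (-μ * (c 0 * s)))) := by
    intro i
    obtain ⟨Mb, hMb⟩ := (isCompact_Icc (a := (0:ℝ)) (b := 1)).exists_bound_of_continuousOn
      (Continuous.continuousOn ((continuous_apply i).comp hbc))
    obtain ⟨Mc, hMc⟩ := (isCompact_Icc (a := (0:ℝ)) (b := 1)).exists_bound_of_continuousOn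
      hc_cont.continuousOn
    have hMb0 : (0:ℝ) ≤ Mb := le_trans (norm_nonneg _) (hMb 0 ⟨le_refl 0, zero_le_one⟩)
    have hCb : ∀ t ∈ Icc (0:ℝ) 1, ‖C t‖ ≤ Mc * t := by
      intro t ht
      have hb' : ∀ x ∈ Set.uIoc (0:ℝ) t, ‖c x‖ ≤ Mc := by
        intro x hx
        rw [uIoc_of_le ht.1] at hx
        exact hMc x ⟨le_of_lt hx.1, le_trans hx.2 ht.2⟩
      have h := intervalIntegral.norm_integral_le_of_norm_le_const hb'
      rwa [sub_zero, abs_of_nonneg ht.1] at h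
    apply intervalIntegral.tendsto_integral_filter_of_dominated_convergence
      (bound := fun _ => Mb * Real.exp (‖μ‖ * Mc))
    · -- measurability
      apply Eventually.of_forall
      intro δ
      apply Continuous.aestronglyMeasurable
      apply Continuous.mul
      · exact (hbci i).comp (continuous_const.mul continuous_id)
      · exact Complex.continuous_exp.comp (continuous_const.mul
          ((hC_cont.comp (continuous_const.mul continuous_id)).div_const _))
    · -- uniform bound
      filter_upwards [Ioc_mem_nhdsGT (zero_lt_one (α := ℝ))]
        with δ hδ
      apply Eventually.of_forall
      intro s hs
      rw [uIoc_of_le zero_le_one] at hs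
      have hδ0 : 0 < δ := hδ.1
      have hδ1 : δ ≤ 1 := hδ.2
      have hds : δ * s ∈ Icc (0:ℝ) 1 :=
        ⟨mul_nonneg hδ0.le (le_of_lt hs.1),
          by calc δ * s ≤ 1 * 1 := mul_le_mul hδ1 hs.2 (le_of_lt hs.1) zero_le_one
             _ = 1 := mul_one 1⟩
      rw [norm_mul]
      have h1 : ‖((b (δ*s) i : ℝ):ℂ)‖ ≤ Mb := by
        rw [Complex.norm_real]
        exact hMb _ hds
      have h2 : ‖Complex.exp (-μ * (C (δ*s)/(δ:ℂ)))‖ ≤ Real.exp (‖μ‖ * Mc) := by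
        rw [Complex.norm_exp]
        apply Real.exp_le_exp.mpr
        have hre : (-μ * (C (δ*s)/(δ:ℂ))).re ≤ ‖(-μ * (C (δ*s)/(δ:ℂ)))‖ :=
          Complex.re_le_norm _
        refine le_trans hre ?_
        rw [norm_mul, norm_neg, norm_div]
        have hCe : ‖C (δ*s)‖ / ‖((δ:ℂ))‖ ≤ Mc := by
          rw [Complex.norm_real, Real.norm_eq_abs, abs_of_pos hδ0]
          rw [div_le_iff₀ hδ0]
          calc ‖C (δ*s)‖ = ‖C (δ*s)‖ := rfl
            _ ≤ Mc * (δ * s) := hCb _ hds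
            _ ≤ Mc * δ := by
                have hMc0 : (0:ℝ) ≤ Mc := le_trans (norm_nonneg _) (hMc 0 ⟨le_refl 0, zero_le_one⟩)
                have : δ * s ≤ δ := by nlinarith [hs.2, hδ0.le]
                nlinarith
            _ = Mc * δ := rfl
        exact mul_le_mul_of_nonneg_left hCe (norm_nonneg _)
      exact mul_le_mul h1 h2 (norm_nonneg _) hMb0
    · exact intervalIntegrable_const
    · -- pointwise convergence
      apply Eventually.of_forall
      intro s hs
      rw [uIoc_of_le zero_le_one] at hs
      have hs0 : 0 < s := hs.1
      have t1 : Tendsto (fun δ : ℝ => δ * s) (nhdsWithin 0 (Ioi (0:ℝ))) (nhds 0) := by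
        have h := (tendsto_id.mono_left nhdsWithin_le_nhds :
          Tendsto id (nhdsWithin (0:ℝ) (Ioi 0)) (nhds 0)).mul_const s
        simpa using h
      have t2 : Tendsto (fun δ : ℝ => δ * s) (nhdsWithin 0 (Ioi (0:ℝ)))
          (nhdsWithin 0 {(0:ℝ)}ᶜ) := by
        rw [tendsto_nhdsWithin_iff]
        refine ⟨t1, ?_⟩
        filter_upwards [self_mem_nhdsWithin] with δ hδ
        exact (mul_pos hδ hs0).ne'
      have hslope := hasDerivAt_iff_tendsto_slope.mp (hC_deriv 0)
      have hs2 : Tendsto (fun δ : ℝ => slope C 0 (δ * s)) (nhdsWithin 0 (Ioi (0:ℝ))) (nhds (c 0)) :=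
        hslope.comp t2
      have hC_lim : Tendsto (fun δ : ℝ => C (δ*s)/(δ:ℂ)) (nhdsWithin 0 (Ioi (0:ℝ)))
          (nhds (c 0 * (s:ℂ))) := by
        have h3 : Tendsto (fun δ : ℝ => s • slope C 0 (δ * s)) (nhdsWithin 0 (Ioi (0:ℝ)))
            (nhds (s • c 0)) := hs2.const_smul s
        have h4 : (s • c 0 : ℂ) = c 0 * (s:ℂ) := by
          rw [Complex.real_smul]; ring
        rw [← h4]
        refine Tendsto.congr' ?_ h3
        filter_upwards [self_mem_nhdsWithin] with δ hδ
        have hδ0 : (δ:ℝ) ≠ 0 := ne_of_gt hδ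
        have hsl : slope C 0 (δ * s) = (δ * s)⁻¹ • C (δ * s) := by
          rw [slope_def_module, hC0, sub_zero, sub_zero]
        rw [hsl, smul_smul]
        have hss : s * (δ * s)⁻¹ = δ⁻¹ := by
          field_simp
          try ring
        rw [hss, Complex.real_smul, Complex.ofReal_inv]
        ring
      have hexp_lim := (Complex.continuous_exp.tendsto _).comp (hC_lim.const_mul (-μ))
      have hb_lim : Tendsto (fun δ : ℝ => ((b (δ*s) i : ℝ):ℂ)) (nhdsWithin 0 (Ioi (0:ℝ)))
          (nhds ((b 0 i : ℝ):ℂ)) := by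
        have := ((hbci i).tendsto 0).comp t1
        exact this
      exact hb_lim.mul hexp_lim
  -- identification of the limit matrix with the matrix exponential
  have hfin : ∀ i j, (NormedSpace.exp
        (-μ • Matrix.vecMulVec (fun i => ((b 0 i : ℝ) : ℂ)) (fun j => ((K0 j : ℝ) : ℂ)))) i j
      = (1 : Matrix (Fin n) (Fin n) ℂ) i j + (-μ * (K0 j : ℂ)) *
        ∫ s in (0:ℝ)..1, ((b 0 i : ℝ) : ℂ) * Complex.exp (-μ * (c 0 * s)) := by
    intro i j
    have hB2 : (Matrix.vecMulVec (fun i => ((b 0 i : ℝ) : ℂ)) (fun j => ((K0 j : ℝ) : ℂ)))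
        * (Matrix.vecMulVec (fun i => ((b 0 i : ℝ) : ℂ)) (fun j => ((K0 j : ℝ) : ℂ)))
        = c 0 • (Matrix.vecMulVec (fun i => ((b 0 i : ℝ) : ℂ)) (fun j => ((K0 j : ℝ) : ℂ))) := by
      ext i' j'
      simp only [Matrix.mul_apply, Matrix.vecMulVec_apply, Matrix.smul_apply, smul_eq_mul,
        hc_def]
      rw [Finset.sum_mul]
      exact Finset.sum_congr rfl fun k _ => by ring
    have hA2 : (-μ • Matrix.vecMulVec (fun i => ((b 0 i : ℝ) : ℂ)) (fun j => ((K0 j : ℝ) : ℂ)))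
        * (-μ • Matrix.vecMulVec (fun i => ((b 0 i : ℝ) : ℂ)) (fun j => ((K0 j : ℝ) : ℂ)))
        = (-(μ * c 0)) •
          (-μ • Matrix.vecMulVec (fun i => ((b 0 i : ℝ) : ℂ)) (fun j => ((K0 j : ℝ) : ℂ))) := by
      rw [smul_mul_assoc, mul_smul_comm, hB2, smul_smul, smul_smul, smul_smul]
      congr 1
      ring
    rw [aux_exp_sq _ _ hA2]
    have hI : (∫ s in (0:ℝ)..1, Complex.exp (-μ * (c 0 * (s:ℂ))))
        = if -(μ * c 0) = 0 then 1 else (Complex.exp (-(μ * c 0)) - 1) / (-(μ * c 0)) := by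
      have hcongr : ∀ s : ℝ, -μ * (c 0 * (s:ℂ)) = (-(μ * c 0)) * (s:ℂ) := fun s => by ring
      by_cases hz : -(μ * c 0) = 0
      · rw [if_pos hz]
        have hone : (fun s : ℝ => Complex.exp (-μ * (c 0 * (s:ℂ)))) = fun _ => (1:ℂ) :=
          funext fun s => by rw [hcongr s, hz, zero_mul, Complex.exp_zero]
        rw [hone]
        simp
      · rw [if_neg hz]
        simp_rw [hcongr]
        rw [integral_exp_mul_complex hz]
        norm_num
    have hpull : (∫ s in (0:ℝ)..1, ((b 0 i : ℝ) : ℂ) * Complex.exp (-μ * (c 0 * (s:ℂ))))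
        = ((b 0 i : ℝ) : ℂ) * ∫ s in (0:ℝ)..1, Complex.exp (-μ * (c 0 * (s:ℂ))) :=
      intervalIntegral.integral_const_mul _ _
    rw [hpull, hI]
    simp only [Matrix.add_apply, Matrix.smul_apply, Matrix.vecMulVec_apply, smul_eq_mul]
    ring
  -- assemble
  refine tendsto_pi_nhds.mpr ?_
  intro i
  rw [tendsto_pi_nhds]
  intro j
  have hev : (fun δ : ℝ => (1 : Matrix (Fin n) (Fin n) ℂ) i j + (-μ * (K0 j : ℂ)) *
        ∫ s in (0:ℝ)..1, ((b (δ*s) i : ℝ) : ℂ) * Complex.exp (-μ * (C (δ*s) / δ)))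
      =ᶠ[nhdsWithin 0 (Ioi (0:ℝ))] fun δ => Zd δ δ i j := by
    filter_upwards [self_mem_nhdsWithin] with δ hδ
    exact (hkey δ hδ i j).symm
  refine Tendsto.congr' hev ?_
  rw [hfin i j]
  exact tendsto_const_nhds.add (tendsto_const_nhds.mul (hInt i))
end
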